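/- arXiv:1704.05232 — 5 statements merged into one kernel-verified Lean document; each statement's English description precedes it below -/
import Mathlib

section
/- There is a universal constant c > 0 such that the following holds. For every ε with 0 < ε ≤ 1 and every finite family X of n ≥ 2 points in ℝ, there exists a finite set S ⊆ ℝ with |S| ≤ c · (log n)/√ε such that Σ_{x ∈ X} min_{s ∈ S} (x − s)² ≤ ε · Σ_{x ∈ X} x². -/
noncomputable def costR {n : ℕ} (S : Finset ℝ) (X : Fin n → ℝ) : ℝ :=
  ∑ i, sInf ((fun s => (X i - s) ^ 2) '' (S : Set ℝ))

lemma sInf_le_pt {n : ℕ} (S : Finset ℝ) (X : Fin n → ℝ) (i : Fin n) {s : ℝ} (hs : s ∈ S) :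
    sInf ((fun s => (X i - s) ^ 2) '' (S : Set ℝ)) ≤ (X i - s) ^ 2 := by
  apply csInf_le
  · exact ⟨0, by rintro y ⟨u, hu, rfl⟩; positivity⟩
  · exact ⟨s, hs, rfl⟩

lemma grid_step {t r x b : ℝ} (ht : 0 < t) (hr0 : 0 < r) (htx : t ≤ x)
    (hb : Real.log (x / t) / Real.log (1 + r) ≤ b) :
    ∃ j : ℕ, j ≤ ⌈b⌉₊ ∧ t * (1 + r) ^ j ≤ x ∧ x - t * (1 + r) ^ j ≤ r * x := by
  have h1r : (0:ℝ) < 1 + r := by linarith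
  have hlg : 0 < Real.log (1 + r) := Real.log_pos (by linarith)
  have hx0 : 0 < x := lt_of_lt_of_le ht htx
  have hxt1 : 1 ≤ x / t := (one_le_div ht).mpr htx
  set a : ℝ := Real.log (x / t) / Real.log (1 + r) with hadef
  have ha0 : 0 ≤ a := div_nonneg (Real.log_nonneg hxt1) hlg.le
  have hlow : t * (1 + r) ^ ⌊a⌋₊ ≤ x := by
    have h1 : (⌊a⌋₊ : ℝ) * Real.log (1 + r) ≤ Real.log (x / t) := by
      have h := Nat.floor_le ha0
      calc (⌊a⌋₊ : ℝ) * Real.log (1 + r) ≤ a * Real.log (1 + r) :=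
            mul_le_mul_of_nonneg_right h hlg.le
        _ = Real.log (x / t) := by rw [hadef]; field_simp
    have h2 : ((1 + r):ℝ) ^ ⌊a⌋₊ ≤ x / t := by
      have := Real.exp_le_exp.mpr h1
      rwa [Real.exp_nat_mul, Real.exp_log h1r, Real.exp_log (by positivity)] at this
    calc t * (1 + r) ^ ⌊a⌋₊ ≤ t * (x / t) := mul_le_mul_of_nonneg_left h2 ht.le
      _ = x := by field_simp
  refine ⟨⌊a⌋₊, le_trans (Nat.floor_mono hb) (Nat.floor_le_ceil b), hlow, ?_⟩
  have h1 : Real.log (x / t) < ((⌊a⌋₊:ℝ) + 1) * Real.log (1 + r) := by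
    have h := Nat.lt_floor_add_one a
    have h' := (div_lt_iff₀ hlg).mp (show a < (⌊a⌋₊:ℝ) + 1 by exact_mod_cast h)
    linarith
  have h2 : x / t < ((1 + r):ℝ) ^ (⌊a⌋₊ + 1) := by
    have := Real.exp_lt_exp.mpr h1
    rw [Real.exp_log (by positivity)] at this
    calc x / t < Real.exp (((⌊a⌋₊:ℝ) + 1) * Real.log (1 + r)) := this
      _ = (1 + r) ^ (⌊a⌋₊ + 1) := by
          rw [show ((⌊a⌋₊:ℝ) + 1) = ((⌊a⌋₊ + 1 : ℕ) : ℝ) by push_cast; ring,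
            Real.exp_nat_mul, Real.exp_log h1r]
  have h3 : x < t * (1 + r) ^ (⌊a⌋₊ + 1) := by
    calc x = t * (x / t) := by field_simp
      _ < t * (1 + r) ^ (⌊a⌋₊ + 1) := mul_lt_mul_of_pos_left h2 ht
  have e1 : t * (1 + r) ^ (⌊a⌋₊ + 1) = t * (1 + r) ^ ⌊a⌋₊ + (t * (1 + r) ^ ⌊a⌋₊) * r := by
    ring
  have e3 : (t * (1 + r) ^ ⌊a⌋₊) * r ≤ x * r := mul_le_mul_of_nonneg_right hlow hr0.le
  nlinarith

lemma exists_sym_grid (t r b : ℝ) :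
    ∃ S : Finset ℝ, (0:ℝ) ∈ S ∧
      (∀ j : ℕ, j ≤ ⌈b⌉₊ → t*(1+r)^j ∈ S ∧ -(t*(1+r)^j) ∈ S) ∧
      S.card ≤ 2 * ⌈b⌉₊ + 3 := by
  classical
  set G : Finset ℝ := (Finset.range (⌈b⌉₊+1)).image (fun j => t*(1+r)^j) with hG
  refine ⟨insert 0 (G ∪ G.image (fun s => -s)), Finset.mem_insert_self _ _, ?_, ?_⟩
  · intro j hj
    have hjG : t*(1+r)^j ∈ G :=
      Finset.mem_image_of_mem _ (Finset.mem_range.mpr (by omega))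
    exact ⟨Finset.mem_insert_of_mem (Finset.mem_union_left _ hjG),
      Finset.mem_insert_of_mem (Finset.mem_union_right _ (Finset.mem_image_of_mem _ hjG))⟩
  · have h1 : (insert (0:ℝ) (G ∪ G.image (fun s => -s))).card ≤
        (G ∪ G.image (fun s => -s)).card + 1 := Finset.card_insert_le _ _
    have h2 : (G ∪ G.image (fun s => -s)).card ≤
        G.card + (G.image (fun s => -s)).card := Finset.card_union_le _ _
    have h3 : G.card ≤ ⌈b⌉₊ + 1 := by
      refine le_trans Finset.card_image_le ?_
      simp
    have h4 : (G.image (fun s => -s)).card ≤ G.card := Finset.card_image_le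
    omega

set_option maxHeartbeats 2000000 in
/-- There is a universal constant `c > 0` such that for every
`0 < ε ≤ 1` and every family `X` of `n ≥ 2` points in `ℝ`, there is a finite set
`S ⊆ ℝ` with `|S| ≤ c · log n / √ε` and `Φ(S, X) ≤ ε · Σ_{x ∈ X} x²`. -/
theorem oneDim_kmeans_upper_bound :
    ∃ c : ℝ, 0 < c ∧
      ∀ ε : ℝ, 0 < ε → ε ≤ 1 →
      ∀ n : ℕ, 2 ≤ n →
      ∀ X : Fin n → ℝ,
        ∃ S : Finset ℝ, S.Nonempty ∧
          (S.card : ℝ) ≤ c * Real.log n / Real.sqrt ε ∧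
          costR S X ≤ ε * ∑ i, (X i) ^ 2 := by
  refine ⟨100, by norm_num, ?_⟩
  intro ε hε hε1 n hn X
  have hn0 : (0:ℝ) < n := by positivity
  have hn2 : (2:ℝ) ≤ n := by exact_mod_cast hn
  have hlog2 : (0.6931:ℝ) ≤ Real.log 2 := by
    have := Real.log_two_gt_d9; linarith
  have hlogn : Real.log 2 ≤ Real.log n := Real.log_le_log (by norm_num) hn2
  have hlogn0 : 0 ≤ Real.log n := le_trans (by linarith) hlogn
  have hsε : 0 < Real.sqrt ε := Real.sqrt_pos.mpr hε
  have hsε1 : Real.sqrt ε ≤ 1 := Real.sqrt_le_one.mpr hε1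
  have hi0 : (Finset.univ : Finset (Fin n)).Nonempty :=
    ⟨⟨0, by omega⟩, Finset.mem_univ _⟩
  by_cases hcase : ε * (n:ℝ)^2 < 1
  · -- tiny ε: use all points as centers
    refine ⟨Finset.image X Finset.univ, hi0.image X, ?_, ?_⟩
    · have h1 : ((Finset.image X Finset.univ).card : ℝ) ≤ n := by
        have h0 : (Finset.image X Finset.univ).card ≤ (Finset.univ : Finset (Fin n)).card :=
          Finset.card_image_le
        simp only [Finset.card_univ, Fintype.card_fin] at h0
        exact_mod_cast h0
      have h2 : Real.sqrt ε * n ≤ 1 := by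
        have : Real.sqrt (ε * (n:ℝ)^2) ≤ Real.sqrt 1 := Real.sqrt_le_sqrt hcase.le
        rwa [Real.sqrt_mul hε.le, Real.sqrt_sq hn0.le, Real.sqrt_one] at this
      rw [le_div_iff₀ hsε]
      nlinarith
    · have h : costR (Finset.image X Finset.univ) X ≤ 0 := by
        unfold costR
        have hb : ∀ i : Fin n, sInf ((fun s => (X i - s) ^ 2) ''
            ((Finset.image X Finset.univ : Finset ℝ) : Set ℝ)) ≤ 0 := by
          intro i
          have := sInf_le_pt (Finset.image X Finset.univ) X i
            (Finset.mem_image_of_mem X (Finset.mem_univ i))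
          simpa using this
        calc ∑ i, sInf ((fun s => (X i - s) ^ 2) ''
              ((Finset.image X Finset.univ : Finset ℝ) : Set ℝ))
            ≤ ∑ _i : Fin n, (0:ℝ) := Finset.sum_le_sum (fun i _ => hb i)
          _ = 0 := by simp
      have : (0:ℝ) ≤ ε * ∑ i, (X i)^2 := by positivity
      linarith
  · push_neg at hcase
    have h2nε : (1:ℝ) ≤ 2*(n:ℝ)/ε := by
      rw [le_div_iff₀ hε]; nlinarith
    -- an abstract r with the needed properties
    obtain ⟨r, hr0, hr1, hr2⟩ : ∃ r : ℝ, 0 < r ∧ r ≤ 1 ∧ r^2 = ε/2 :=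
      ⟨Real.sqrt (ε/2), Real.sqrt_pos.mpr (by linarith),
        Real.sqrt_le_one.mpr (by linarith), Real.sq_sqrt (by linarith)⟩
    have h1r : (0:ℝ) < 1 + r := by linarith
    have hlg0 : 0 < Real.log (1 + r) := Real.log_pos (by linarith)
    -- an abstract M
    obtain ⟨M, hM, hM0, hM2⟩ : ∃ M : ℝ, (∀ i, |X i| ≤ M) ∧ 0 ≤ M ∧
        M^2 ≤ ∑ i, (X i)^2 := by
      obtain ⟨i0, -, hMi0⟩ := Finset.exists_mem_eq_sup' hi0 (fun i => |X i|)
      refine ⟨Finset.univ.sup' hi0 (fun i => |X i|),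
        fun i => Finset.le_sup' (fun i => |X i|) (Finset.mem_univ i),
        le_trans (abs_nonneg _) (Finset.le_sup' (fun i => |X i|) (Finset.mem_univ ⟨0, by omega⟩)), ?_⟩
      rw [hMi0, sq_abs]
      exact Finset.single_le_sum (f := fun i => (X i)^2)
        (fun i _ => sq_nonneg _) (Finset.mem_univ i0)
    -- an abstract t
    obtain ⟨t, ht0, hnt, htpos'⟩ : ∃ t : ℝ, 0 ≤ t ∧ (n:ℝ)*t^2 = (ε/2)*M^2 ∧
        (0 < M → 0 < t ∧ M/t = Real.sqrt (2*(n:ℝ)/ε)) := by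
      have hq0 : 0 < Real.sqrt (ε / (2*(n:ℝ))) := Real.sqrt_pos.mpr (by positivity)
      have hq2 : Real.sqrt (ε / (2*(n:ℝ))) ^ 2 = ε / (2*(n:ℝ)) :=
        Real.sq_sqrt (by positivity)
      refine ⟨M * Real.sqrt (ε / (2*(n:ℝ))), mul_nonneg hM0 hq0.le, ?_, fun hMp => ⟨mul_pos hMp hq0, ?_⟩⟩
      · rw [mul_pow, hq2]; field_simp
      · rw [show M/(M * Real.sqrt (ε / (2*(n:ℝ)))) = (Real.sqrt (ε / (2*(n:ℝ))))⁻¹ by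
          rw [div_mul_eq_div_div, div_self (ne_of_gt hMp), one_div]]
        rw [← Real.sqrt_inv, inv_div]
    -- an abstract b
    obtain ⟨b, hb0, hbub, hbsε⟩ : ∃ b : ℝ, 0 ≤ b ∧
        (∀ z : ℝ, 0 < z → z ≤ Real.sqrt (2*(n:ℝ)/ε) →
          Real.log z / Real.log (1+r) ≤ b) ∧
        b * Real.sqrt ε ≤ 6 * Real.log n := by
      have hs1 : (1:ℝ) ≤ Real.sqrt (2*(n:ℝ)/ε) := by
        rw [show (1:ℝ) = Real.sqrt 1 by simp]
        exact Real.sqrt_le_sqrt h2nε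
      refine ⟨Real.log (Real.sqrt (2*(n:ℝ)/ε)) / Real.log (1+r),
        div_nonneg (Real.log_nonneg hs1) hlg0.le, ?_, ?_⟩
      · intro z hz hzle
        exact div_le_div_of_nonneg_right (Real.log_le_log hz hzle) hlg0.le
      · have hlgr : r/2 ≤ Real.log (1+r) := by
          have hA := Real.log_le_sub_one_of_pos (inv_pos.mpr h1r)
          rw [Real.log_inv] at hA
          have hB : (1+r)⁻¹ ≤ 1 - r/2 := by
            rw [show (1+r)⁻¹ = 1/(1+r) by rw [one_div], div_le_iff₀ h1r]
            nlinarith [mul_nonneg hr0.le (sub_nonneg.mpr hr1)]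
          linarith
        have hlog4 : Real.log (2*(n:ℝ)/ε) ≤ 4 * Real.log n := by
          have h7 : (1:ℝ)/((n:ℝ)^2) ≤ ε := by
            rw [div_le_iff₀ (by positivity)]; linarith
          have h8 : Real.log ((1:ℝ)/((n:ℝ)^2)) ≤ Real.log ε :=
            Real.log_le_log (by positivity) h7
          have h9 : Real.log ((1:ℝ)/((n:ℝ)^2)) = -(2 * Real.log n) := by
            rw [one_div, Real.log_inv, Real.log_pow]
            push_cast; ring
          have h10 : Real.log (2*(n:ℝ)/ε) = Real.log 2 + Real.log n - Real.log ε := by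
            rw [Real.log_div (by positivity) (ne_of_gt hε),
              Real.log_mul (by norm_num) (ne_of_gt hn0)]
          rw [h10]; linarith
        have hln2 : 0 ≤ Real.log (2*(n:ℝ)/ε) := Real.log_nonneg h2nε
        have hbb : Real.log (Real.sqrt (2*(n:ℝ)/ε)) = Real.log (2*(n:ℝ)/ε) / 2 :=
          Real.log_sqrt (by positivity)
        have hrε : r = Real.sqrt ε / Real.sqrt 2 := by
          rw [show r = Real.sqrt (ε/2) by rw [← hr2, Real.sqrt_sq hr0.le],
            Real.sqrt_div hε.le]
        have hs2 : Real.sqrt 2 ≤ 1.5 := by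
          nlinarith [Real.sq_sqrt (show (0:ℝ) ≤ 2 by norm_num), Real.sqrt_nonneg 2]
        have hs2' : 0 < Real.sqrt 2 := Real.sqrt_pos.mpr (by norm_num)
        have h13 : (Real.log (Real.sqrt (2*(n:ℝ)/ε)) / Real.log (1+r)) * Real.sqrt ε
            ≤ ((Real.log (2*(n:ℝ)/ε)/2) / (r/2)) * Real.sqrt ε := by
          apply mul_le_mul_of_nonneg_right ?_ hsε.le
          rw [hbb]
          exact div_le_div_of_nonneg_left (by linarith) (by linarith) hlgr
        have h14 : ((Real.log (2*(n:ℝ)/ε)/2) / (r/2)) * Real.sqrt ε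
            = Real.log (2*(n:ℝ)/ε) * Real.sqrt 2 := by
          rw [hrε]
          field_simp
        have h15 : Real.log (2*(n:ℝ)/ε) * Real.sqrt 2 ≤ 4 * Real.log n * 1.5 :=
          mul_le_mul hlog4 hs2 hs2'.le (by linarith)
        calc (Real.log (Real.sqrt (2*(n:ℝ)/ε)) / Real.log (1+r)) * Real.sqrt ε
            ≤ ((Real.log (2*(n:ℝ)/ε)/2) / (r/2)) * Real.sqrt ε := h13
          _ = Real.log (2*(n:ℝ)/ε) * Real.sqrt 2 := h14
          _ ≤ 4 * Real.log n * 1.5 := h15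
          _ = 6 * Real.log n := by ring
    -- the grid finset
    obtain ⟨S, h0S, hmem, hcardN⟩ := exists_sym_grid t r b
    have hkey : ∀ i, sInf ((fun s => (X i - s) ^ 2) '' (S : Set ℝ))
        ≤ t^2 + (ε/2) * (X i)^2 := by
      intro i
      by_cases hx : |X i| ≤ t
      · have h5 := sInf_le_pt S X i h0S
        have hxx : (X i - 0)^2 ≤ t^2 := by
          rw [sub_zero, ← sq_abs]
          exact pow_le_pow_left₀ (abs_nonneg _) hx 2
        have h7 : 0 ≤ (ε/2) * (X i)^2 := mul_nonneg (by linarith) (sq_nonneg _)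
        linarith
      · push_neg at hx
        have hxpos : 0 < |X i| := lt_of_le_of_lt ht0 hx
        have hMpos : 0 < M := lt_of_lt_of_le hxpos (hM i)
        obtain ⟨htpos, hMt⟩ := htpos' hMpos
        have hab : Real.log (|X i| / t) / Real.log (1+r) ≤ b := by
          apply hbub _ (div_pos hxpos htpos)
          rw [← hMt]
          exact div_le_div_of_nonneg_right (hM i) htpos.le
        obtain ⟨j, hjJ, hlow, hdiff⟩ := grid_step htpos hr0 hx.le hab
        obtain ⟨hjS, hjS'⟩ := hmem j hjJ
        have hsq : (|X i| - t*(1+r)^j)^2 ≤ (ε/2) * (X i)^2 := by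
          have h1 : 0 ≤ |X i| - t*(1+r)^j := by linarith
          have h2 : (|X i| - t*(1+r)^j)^2 ≤ (r * |X i|)^2 :=
            pow_le_pow_left₀ h1 hdiff 2
          calc (|X i| - t*(1+r)^j)^2 ≤ (r * |X i|)^2 := h2
            _ = r^2 * |X i|^2 := by ring
            _ = (ε/2) * (X i)^2 := by rw [hr2, sq_abs]
        have ht2 : 0 ≤ t^2 := sq_nonneg t
        rcases le_or_gt 0 (X i) with hsign | hsign
        · have h6 := sInf_le_pt S X i hjS
          have habs : X i = |X i| := (abs_of_nonneg hsign).symm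
          have he : (X i - t*(1+r)^j)^2 = (|X i| - t*(1+r)^j)^2 := by rw [← habs]
          linarith
        · have h6 := sInf_le_pt S X i hjS'
          have habs : |X i| = -(X i) := abs_of_neg hsign
          have he : (X i - (-(t*(1+r)^j)))^2 = (|X i| - t*(1+r)^j)^2 := by
            rw [habs]; ring
          linarith
    refine ⟨S, ⟨0, h0S⟩, ?_, ?_⟩
    · -- cardinality bound
      have hJb : ((⌈b⌉₊ : ℕ) : ℝ) ≤ b + 1 := (Nat.ceil_lt_add_one hb0).le
      have hc1 : (S.card:ℝ) ≤ 2*((⌈b⌉₊ : ℕ):ℝ) + 3 := by exact_mod_cast hcardN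
      have hc2 : (S.card:ℝ) ≤ 2*b + 5 := by linarith
      rw [le_div_iff₀ hsε]
      calc (S.card:ℝ) * Real.sqrt ε ≤ (2*b + 5) * Real.sqrt ε :=
            mul_le_mul_of_nonneg_right hc2 hsε.le
        _ = 2*(b*Real.sqrt ε) + 5*Real.sqrt ε := by ring
        _ ≤ 2*(6*Real.log n) + 5*1 := by
            have h16 : 5 * Real.sqrt ε ≤ 5 * 1 := by linarith
            linarith
        _ ≤ 100 * Real.log n := by nlinarith
    · -- cost bound
      have hsum0 : (0:ℝ) ≤ ∑ i, (X i)^2 := Finset.sum_nonneg (fun i _ => sq_nonneg _)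
      have hεM : (ε/2) * M^2 ≤ (ε/2) * ∑ i, (X i)^2 :=
        mul_le_mul_of_nonneg_left hM2 (by linarith)
      unfold costR
      calc ∑ i, sInf ((fun s => (X i - s) ^ 2) '' (S : Set ℝ))
          ≤ ∑ i, (t^2 + (ε/2) * (X i)^2) := Finset.sum_le_sum (fun i _ => hkey i)
        _ = (n:ℝ) * t^2 + (ε/2) * ∑ i, (X i)^2 := by
            rw [Finset.sum_add_distrib, Finset.sum_const, ← Finset.mul_sum]
            simp [Finset.card_univ]
        _ = (ε/2) * M^2 + (ε/2) * ∑ i, (X i)^2 := by rw [hnt]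
        _ ≤ ε * ∑ i, (X i)^2 := by linarith
end

section
/- There is a universal constant c > 0 such that for every ε with 0 < ε < 1/8 there exist arbitrarily large integers n and a family X of n points in ℝ (points may be repeated) with the following property: every finite set S ⊆ ℝ satisfying Σ_{x ∈ X} min_{s ∈ S} (x − s)² ≤ ε · Σ_{x ∈ X} x² has cardinality |S| ≥ c · (log n)/√ε. -/
set_option maxHeartbeats 4000000

/-- There is a universal constant `c > 0` such that for every
`0 < ε < 1/8` there are arbitrarily large `n` and a family `X` of `n` points in `ℝ`
(repetitions allowed) such that every finite nonempty set `S ⊆ ℝ` with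
`Φ(S, X) ≤ ε · Σ_{x ∈ X} x²` has `|S| ≥ c · log n / √ε`. -/
theorem oneDim_kmeans_lower_bound :
    ∃ c : ℝ, 0 < c ∧
      ∀ ε : ℝ, 0 < ε → ε < 1 / 8 →
      ∀ N : ℕ, ∃ n : ℕ, N ≤ n ∧
        ∃ X : Fin n → ℝ,
          ∀ S : Finset ℝ, S.Nonempty →
            costR S X ≤ ε * ∑ i, (X i) ^ 2 →
            c * Real.log n / Real.sqrt ε ≤ (S.card : ℝ) := by
  classical
  refine ⟨1/112, by norm_num, ?_⟩
  intro ε hε0 hε8 N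
  set s : ℝ := Real.sqrt ε with hs_def
  have hs0 : 0 < s := Real.sqrt_pos.2 hε0
  have hs2 : s ^ 2 = ε := Real.sq_sqrt hε0.le
  have hs514 : s < 5 / 14 := by nlinarith [hs2, hs0]
  set a : ℝ := 1 + 14 * s with ha_def
  have ha1 : 1 < a := by rw [ha_def]; nlinarith
  have ha0 : 0 < a := by linarith
  set m : ℕ := max N (⌈1 / ε⌉₊ + 1) with hm_def
  have hm1 : 1 ≤ m := le_trans (Nat.le_add_left 1 _) (le_max_right _ _)
  have hmN : N ≤ m := le_max_left _ _
  have hmε : 1 / ε ≤ (m : ℝ) := by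
    have h1 : ((⌈1/ε⌉₊ : ℕ) : ℝ) ≤ (m : ℝ) := by
      exact_mod_cast (Nat.le_succ _).trans (le_max_right _ _)
    exact (Nat.le_ceil _).trans h1
  have hm0 : (0:ℝ) < m := by exact_mod_cast hm1
  have hpow1 : ∀ k : ℕ, (1:ℝ) ≤ a ^ k := fun k => one_le_pow₀ ha1.le
  have hpow0 : ∀ k : ℕ, (0:ℝ) < a ^ k := fun k => pow_pos ha0 k
  set w : Fin m → ℕ := fun j => ⌈a ^ (2 * (m - 1 - (j : ℕ)))⌉₊ with hw_def
  have hw_lb : ∀ j : Fin m, a ^ (2 * (m - 1 - (j : ℕ))) ≤ (w j : ℝ) := fun j => Nat.le_ceil _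
  have hw_ub : ∀ j : Fin m, (w j : ℝ) ≤ 2 * a ^ (2 * (m - 1 - (j : ℕ))) := by
    intro j
    have h1 := Nat.ceil_lt_add_one (le_of_lt (hpow0 (2 * (m - 1 - (j : ℕ)))))
    have h2 := hpow1 (2 * (m - 1 - (j : ℕ)))
    simp only [hw_def]
    linarith
  have hw1 : ∀ j : Fin m, 1 ≤ w j := fun j => Nat.one_le_ceil_iff.2 (hpow0 _)
  set n : ℕ := ∑ j, w j with hn_def
  have hmn : m ≤ n := by
    calc m = ∑ _j : Fin m, 1 := by simp
    _ ≤ n := Finset.sum_le_sum (fun j _ => hw1 j)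
  have hcard : Fintype.card (Σ j : Fin m, Fin (w j)) = n := by simp [hn_def]
  have e : (Σ j : Fin m, Fin (w j)) ≃ Fin n := Fintype.equivFinOfCardEq hcard
  set X : Fin n → ℝ := fun i => a ^ (((e.symm i).1 : ℕ)) with hX_def
  refine ⟨n, hmN.trans hmn, X, ?_⟩
  intro S hS hcost
  -- transport sums over `Fin n` to weighted sums over `Fin m`
  have hsum : ∀ F : ℝ → ℝ, ∑ i, F (X i) = ∑ j : Fin m, (w j : ℝ) * F (a ^ (j : ℕ)) := by
    intro F
    have h1 : ∑ p : (Σ j : Fin m, Fin (w j)), F (X (e p)) = ∑ i, F (X i) :=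
      Equiv.sum_comp e (fun i => F (X i))
    have h2 : ∀ p : (Σ j : Fin m, Fin (w j)), X (e p) = a ^ ((p.1 : ℕ)) := by
      intro p; simp [hX_def]
    rw [← h1]
    simp_rw [h2]
    rw [← Finset.univ_sigma_univ, Finset.sum_sigma]
    exact Finset.sum_congr rfl (fun j _ => by
      simp [Finset.sum_const, Finset.card_univ, mul_comm])
  have hSset : (S : Set ℝ).Nonempty := Finset.coe_nonempty.2 hS
  set D : ℕ → ℝ := fun k => sInf ((fun t => (a ^ k - t) ^ 2) '' (S : Set ℝ)) with hD_def
  have hattain : ∀ k : ℕ, ∃ y ∈ S, D k = (a ^ k - y) ^ 2 := by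
    intro k
    have hfin : ((fun t => (a ^ k - t) ^ 2) '' (S : Set ℝ)).Finite := S.finite_toSet.image _
    have hne : ((fun t => (a ^ k - t) ^ 2) '' (S : Set ℝ)).Nonempty := hSset.image _
    obtain ⟨y, hyS, hy⟩ := hne.csInf_mem hfin
    exact ⟨y, hyS, hy.symm⟩
  choose σ hσS hσD using hattain
  have hD0 : ∀ k : ℕ, 0 ≤ D k := by intro k; rw [hσD k]; positivity
  have hL : costR S X = ∑ j : Fin m, (w j : ℝ) * D (j : ℕ) :=
    hsum (fun x => sInf ((fun t => (x - t) ^ 2) '' (S : Set ℝ)))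
  have hR : ∑ i, (X i) ^ 2 = ∑ j : Fin m, (w j : ℝ) * (a ^ (j : ℕ)) ^ 2 :=
    hsum (fun x => x ^ 2)
  rw [hL, hR] at hcost
  set A : ℝ := a ^ (2 * (m - 1)) with hA_def
  have hA0 : 0 < A := hpow0 _
  have hAj : ∀ j : Fin m, a ^ (2 * (m - 1 - (j : ℕ))) * (a ^ (j : ℕ)) ^ 2 = A := by
    intro j
    rw [← pow_mul, ← pow_add, hA_def]
    congr 1
    have := j.2
    omega
  have hT_ub : ∑ j : Fin m, (w j : ℝ) * (a ^ (j : ℕ)) ^ 2 ≤ 2 * m * A := by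
    have hterm : ∀ j ∈ Finset.univ, (w j : ℝ) * (a ^ (j : ℕ)) ^ 2 ≤ 2 * A := by
      intro j _
      calc (w j : ℝ) * (a ^ (j : ℕ)) ^ 2
          ≤ (2 * a ^ (2 * (m - 1 - (j : ℕ)))) * (a ^ (j : ℕ)) ^ 2 :=
            mul_le_mul_of_nonneg_right (hw_ub j) (sq_nonneg _)
        _ = 2 * (a ^ (2 * (m - 1 - (j : ℕ))) * (a ^ (j : ℕ)) ^ 2) := by ring
        _ = 2 * A := by rw [hAj j]
    calc ∑ j : Fin m, (w j : ℝ) * (a ^ (j : ℕ)) ^ 2 ≤ ∑ _j : Fin m, 2 * A :=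
          Finset.sum_le_sum hterm
      _ = m * (2 * A) := by
          rw [Finset.sum_const, Finset.card_univ, Fintype.card_fin, nsmul_eq_mul]
      _ = 2 * m * A := by ring
  have hc2 : ∑ j : Fin m, a ^ (2 * (m - 1 - (j : ℕ))) * D (j : ℕ) ≤ 2 * ε * m * A := by
    have h1 : ∑ j : Fin m, a ^ (2 * (m - 1 - (j : ℕ))) * D (j : ℕ)
        ≤ ∑ j : Fin m, (w j : ℝ) * D (j : ℕ) :=
      Finset.sum_le_sum (fun j _ => mul_le_mul_of_nonneg_right (hw_lb j) (hD0 _))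
    have h2 : ε * ∑ j : Fin m, (w j : ℝ) * (a ^ (j : ℕ)) ^ 2 ≤ ε * (2 * m * A) :=
      mul_le_mul_of_nonneg_left hT_ub hε0.le
    nlinarith
  set Bad : Finset (Fin m) :=
    Finset.univ.filter (fun j => 4 * ε * A < a ^ (2 * (m - 1 - (j : ℕ))) * D (j : ℕ)) with hBad_def
  set Good : Finset (Fin m) :=
    Finset.univ.filter (fun j => ¬ (4 * ε * A < a ^ (2 * (m - 1 - (j : ℕ))) * D (j : ℕ))) with hGood_def
  have hsplit : Bad.card + Good.card = m := by
    rw [hBad_def, hGood_def, Finset.card_filter_add_card_filter_not,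
      Finset.card_univ, Fintype.card_fin]
  have hterm0 : ∀ j : Fin m, 0 ≤ a ^ (2 * (m - 1 - (j : ℕ))) * D (j : ℕ) :=
    fun j => mul_nonneg (hpow0 _).le (hD0 _)
  have hBadcard : 4 * ε * A * Bad.card ≤ 2 * ε * m * A := by
    calc 4 * ε * A * Bad.card = ∑ _j ∈ Bad, 4 * ε * A := by
          rw [Finset.sum_const, nsmul_eq_mul]; ring
      _ ≤ ∑ j ∈ Bad, a ^ (2 * (m - 1 - (j : ℕ))) * D (j : ℕ) :=
          Finset.sum_le_sum (fun j hj => le_of_lt (Finset.mem_filter.1 hj).2)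
      _ ≤ ∑ j : Fin m, a ^ (2 * (m - 1 - (j : ℕ))) * D (j : ℕ) :=
          Finset.sum_le_sum_of_subset_of_nonneg (Finset.subset_univ _) (fun j _ _ => hterm0 j)
      _ ≤ 2 * ε * m * A := hc2
  have hBadle : (Bad.card : ℝ) ≤ m / 2 := by
    have hP : (0:ℝ) < 4 * (ε * A) := by positivity
    have h2 : (Bad.card : ℝ) * (4 * (ε * A)) ≤ ((m : ℝ) / 2) * (4 * (ε * A)) := by
      nlinarith [hBadcard]
    exact le_of_mul_le_mul_right h2 hP
  have hGoodcard : (m : ℝ) / 2 ≤ Good.card := by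
    have h : (Bad.card : ℝ) + Good.card = m := by exact_mod_cast hsplit
    linarith
  have hGoodD : ∀ j ∈ Good, D (j : ℕ) ≤ 4 * ε * (a ^ (j : ℕ)) ^ 2 := by
    intro j hj
    have h1 : a ^ (2 * (m - 1 - (j : ℕ))) * D (j : ℕ) ≤ 4 * ε * A :=
      not_lt.1 (Finset.mem_filter.1 hj).2
    have h2 := hAj j
    have h3 := hpow0 (2 * (m - 1 - (j : ℕ)))
    nlinarith [hD0 (j : ℕ)]
  have hmono : ∀ j k : Fin m, j ∈ Good → k ∈ Good → (j : ℕ) < (k : ℕ) →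
      σ (j : ℕ) < σ (k : ℕ) := by
    intro j k hj hk hjk
    have hpj : 0 < a ^ (j : ℕ) := hpow0 _
    have hpk : 0 < a ^ (k : ℕ) := hpow0 _
    have hsq : ∀ l : Fin m, l ∈ Good →
        a ^ (l : ℕ) - 2 * s * a ^ (l : ℕ) ≤ σ (l : ℕ) ∧
        σ (l : ℕ) ≤ a ^ (l : ℕ) + 2 * s * a ^ (l : ℕ) := by
      intro l hl
      have h1 : (a ^ (l : ℕ) - σ (l : ℕ)) ^ 2 ≤ (2 * s * a ^ (l : ℕ)) ^ 2 := by
        have h := hGoodD l hl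
        rw [hσD (l : ℕ)] at h
        nlinarith [hs2]
      constructor <;> nlinarith [mul_pos hs0 (hpow0 (l : ℕ))]
    obtain ⟨hj1, hj2⟩ := hsq j hj
    obtain ⟨hk1, hk2⟩ := hsq k hk
    have hk3 : a * a ^ (j : ℕ) ≤ a ^ (k : ℕ) := by
      calc a * a ^ (j : ℕ) = a ^ ((j : ℕ) + 1) := by rw [pow_succ]; ring
        _ ≤ a ^ (k : ℕ) := pow_le_pow_right₀ ha1.le hjk
    have hkey : (1 + 2 * s) < a * (1 - 2 * s) := by rw [ha_def]; nlinarith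
    have h2s : 2 * s < 1 := by nlinarith
    nlinarith [mul_lt_mul_of_pos_right hkey hpj,
      mul_le_mul_of_nonneg_right hk3 (by linarith : (0:ℝ) ≤ 1 - 2 * s)]
  have hinj : Set.InjOn (fun j : Fin m => σ (j : ℕ)) Good := by
    intro j hj k hk heq
    simp only [Finset.mem_coe] at hj hk
    rcases lt_trichotomy (j : ℕ) (k : ℕ) with h | h | h
    · exact absurd heq (ne_of_lt (hmono j k hj hk h))
    · exact Fin.ext h
    · exact absurd heq.symm (ne_of_lt (hmono k j hk hj h))
  have hcard_le : Good.card ≤ S.card :=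
    Finset.card_le_card_of_injOn _ (fun j _ => hσS (j : ℕ)) hinj
  -- upper bound for log n
  have hn_ub : (n : ℝ) ≤ 2 * m * a ^ (2 * m) := by
    have hterm : ∀ j ∈ Finset.univ, (w j : ℝ) ≤ 2 * a ^ (2 * m) := by
      intro j _
      calc (w j : ℝ) ≤ 2 * a ^ (2 * (m - 1 - (j : ℕ))) := hw_ub j
        _ ≤ 2 * a ^ (2 * m) := by
            have := pow_le_pow_right₀ ha1.le (by omega : 2 * (m - 1 - (j : ℕ)) ≤ 2 * m)
            linarith
    calc (n : ℝ) = ∑ j : Fin m, (w j : ℝ) := by rw [hn_def]; push_cast; rfl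
      _ ≤ ∑ _j : Fin m, 2 * a ^ (2 * m) := Finset.sum_le_sum hterm
      _ = m * (2 * a ^ (2 * m)) := by
          rw [Finset.sum_const, Finset.card_univ, Fintype.card_fin, nsmul_eq_mul]
      _ = 2 * m * a ^ (2 * m) := by ring
  have hlog : Real.log n ≤ 56 * s * m := by
    have hn0 : (0:ℝ) < n := by exact_mod_cast lt_of_lt_of_le hm1 hmn
    have h1 : Real.log n ≤ Real.log (2 * m * a ^ (2 * m)) := Real.log_le_log hn0 hn_ub
    have h2 : Real.log (2 * m * a ^ (2 * m)) = Real.log (2 * m) + (2 * m : ℕ) * Real.log a := by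
      rw [Real.log_mul (by positivity) (by positivity), Real.log_pow]
    have hloga : Real.log a ≤ 14 * s := by
      have h := Real.log_le_sub_one_of_pos ha0
      rw [ha_def] at h ⊢
      linarith
    have hlog2m : Real.log (2 * m) ≤ 2 * Real.sqrt (2 * m) := by
      have h2' : (0:ℝ) < 2 * m := by linarith
      have hsp : 0 < Real.sqrt (2 * m) := Real.sqrt_pos.2 h2'
      have hl1 : Real.log (Real.sqrt (2 * m)) ≤ Real.sqrt (2 * m) - 1 :=
        Real.log_le_sub_one_of_pos hsp
      have hl2 : Real.log (2 * m) = 2 * Real.log (Real.sqrt (2 * m)) := by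
        rw [Real.log_sqrt h2'.le]; ring
      linarith
    have hsqrt : Real.sqrt (2 * (m : ℝ)) ≤ 14 * s * m := by
      rw [show (14 * s * m : ℝ) = Real.sqrt ((14 * s * m) ^ 2) from
        (Real.sqrt_sq (by positivity)).symm]
      apply Real.sqrt_le_sqrt
      have hsq' : (14 * s * m) ^ 2 = 196 * ε * m ^ 2 := by
        rw [show (14 * s * m : ℝ) ^ 2 = 196 * s ^ 2 * m ^ 2 from by ring, hs2]
      rw [hsq']
      have h1εm : 1 ≤ (m : ℝ) * ε := (div_le_iff₀ hε0).1 hmε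
      nlinarith [mul_le_mul_of_nonneg_right h1εm hm0.le]
    have h3 : ((2 * m : ℕ) : ℝ) * Real.log a ≤ 28 * s * m := by
      have hcast : ((2 * m : ℕ) : ℝ) = 2 * m := by push_cast; ring
      rw [hcast]
      nlinarith [mul_le_mul_of_nonneg_left hloga (show (0:ℝ) ≤ 2 * m by positivity)]
    linarith
  have hfinal : (1 / 112 : ℝ) * Real.log n / s ≤ (m : ℝ) / 2 := by
    have h1 : (1 / 112 : ℝ) * Real.log n / s ≤ (1 / 112 : ℝ) * (56 * s * m) / s := by
      gcongr
    have h2 : (1 / 112 : ℝ) * (56 * s * m) / s = m / 2 := by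
      field_simp
      ring
    linarith
  calc (1 / 112 : ℝ) * Real.log n / s ≤ (m : ℝ) / 2 := hfinal
    _ ≤ Good.card := hGoodcard
    _ ≤ S.card := by exact_mod_cast hcard_le
end

section
/- There is a universal constant c > 0 such that the following holds. Let d ≥ 2 and let N(S^{d-1}, δ) denote the covering number of the unit sphere in ℝ^d at scale δ. For every ε with 0 < ε ≤ 1, every integer k ≥ 1, and every finite family X of n ≥ 2 points in ℝ^d, there exists a finite set ξ ⊆ ℝ^d with |ξ| ≤ c · N(S^{d-1}, √(ε/2)) · k · (log n)/√ε such that Φ(ξ, X) ≤ ε · Δ_k(X). -/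
/-- k-means cost of a family `X : Fin n → ℝ^d` with respect to a finite
(nonempty) center set `C ⊆ ℝ^d`: `Φ(C, X) = Σ_i min_{c ∈ C} ‖X i − c‖²`. -/
noncomputable def kmeansCost {d n : ℕ} (C : Finset (EuclideanSpace ℝ (Fin d)))
    (X : Fin n → EuclideanSpace ℝ (Fin d)) : ℝ :=
  ∑ i, sInf ((fun c => dist (X i) c ^ 2) '' (C : Set (EuclideanSpace ℝ (Fin d))))

/-- Optimal k-means cost `Δ_k(X)`: infimum of `Φ(C, X)` over sets `C ⊆ ℝ^d`
with `|C| = k`. -/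
noncomputable def kmeansOpt {d n : ℕ} (k : ℕ) (X : Fin n → EuclideanSpace ℝ (Fin d)) : ℝ :=
  sInf {r : ℝ | ∃ C : Finset (EuclideanSpace ℝ (Fin d)), C.card = k ∧ kmeansCost C X = r}

/-- Covering number `N(S^{d-1}, δ)` of the unit sphere in `ℝ^d` at scale `δ`:
the minimum cardinality of a set `S` of unit vectors such that every unit vector
is within Euclidean distance `δ` of some element of `S`. -/
noncomputable def coveringNumber (d : ℕ) (δ : ℝ) : ℕ :=
  sInf {m : ℕ | ∃ S : Finset (EuclideanSpace ℝ (Fin d)), S.card = m ∧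
    (∀ p ∈ S, ‖p‖ = 1) ∧
    ∀ x : EuclideanSpace ℝ (Fin d), ‖x‖ = 1 → ∃ s ∈ S, dist x s ≤ δ}

section Basics
variable {d n : ℕ} {C : Finset (EuclideanSpace ℝ (Fin d))} {X : Fin n → EuclideanSpace ℝ (Fin d)}

lemma term_nonneg (x : EuclideanSpace ℝ (Fin d)) :
    0 ≤ sInf ((fun c => dist x c ^ 2) '' (C : Set (EuclideanSpace ℝ (Fin d)))) := by
  apply Real.sInf_nonneg
  rintro _ ⟨c, -, rfl⟩
  positivity

lemma term_bddBelow (x : EuclideanSpace ℝ (Fin d)) :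
    BddBelow ((fun c => dist x c ^ 2) '' (C : Set (EuclideanSpace ℝ (Fin d)))) := by
  refine ⟨0, ?_⟩
  rintro _ ⟨c, -, rfl⟩
  positivity

lemma term_le {x c : EuclideanSpace ℝ (Fin d)} (hc : c ∈ C) :
    sInf ((fun c => dist x c ^ 2) '' (C : Set (EuclideanSpace ℝ (Fin d)))) ≤ dist x c ^ 2 :=
  csInf_le (term_bddBelow x) ⟨c, hc, rfl⟩

lemma term_le_of_exists {x : EuclideanSpace ℝ (Fin d)} {b : ℝ}
    (h : ∃ c ∈ C, dist x c ^ 2 ≤ b) :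
    sInf ((fun c => dist x c ^ 2) '' (C : Set (EuclideanSpace ℝ (Fin d)))) ≤ b := by
  obtain ⟨c, hc, hb⟩ := h
  exact le_trans (term_le hc) hb

lemma kmeansCost_nonneg : 0 ≤ kmeansCost C X :=
  Finset.sum_nonneg fun i _ => term_nonneg (X i)

lemma exists_nearest (hC : C.Nonempty) (x : EuclideanSpace ℝ (Fin d)) :
    ∃ c ∈ C, sInf ((fun c => dist x c ^ 2) '' (C : Set (EuclideanSpace ℝ (Fin d)))) = dist x c ^ 2 := by
  have h1 : ((fun c => dist x c ^ 2) '' (C : Set (EuclideanSpace ℝ (Fin d)))).Nonempty :=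
    ⟨_, ⟨hC.choose, hC.choose_spec, rfl⟩⟩
  have h2 : ((fun c => dist x c ^ 2) '' (C : Set (EuclideanSpace ℝ (Fin d)))).Finite :=
    (C.finite_toSet).image _
  obtain ⟨c, hc, hval⟩ := h1.csInf_mem h2
  exact ⟨c, hc, hval.symm⟩

lemma kmeansCost_le_sum {ξ : Finset (EuclideanSpace ℝ (Fin d))} {f : Fin n → ℝ}
    (h : ∀ i, ∃ p ∈ ξ, dist (X i) p ^ 2 ≤ f i) :
    kmeansCost ξ X ≤ ∑ i, f i :=
  Finset.sum_le_sum fun i _ => term_le_of_exists (h i)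

lemma infinite_euclidean (hd : 1 ≤ d) : Infinite (EuclideanSpace ℝ (Fin d)) := by
  refine Infinite.of_injective (fun r : ℝ => EuclideanSpace.single ⟨0, by omega⟩ r) ?_
  intro a b hab
  have := congrArg (fun v : EuclideanSpace ℝ (Fin d) => v ⟨0, by omega⟩) hab
  simpa using this

lemma kmeansOpt_set_nonempty (hd : 1 ≤ d) (k : ℕ) (X : Fin n → EuclideanSpace ℝ (Fin d)) :
    {r : ℝ | ∃ C : Finset (EuclideanSpace ℝ (Fin d)), C.card = k ∧ kmeansCost C X = r}.Nonempty := by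
  haveI := infinite_euclidean hd
  obtain ⟨C, hC⟩ := Infinite.exists_subset_card_eq (EuclideanSpace ℝ (Fin d)) k
  exact ⟨kmeansCost C X, C, hC, rfl⟩

lemma kmeansOpt_nonneg (k : ℕ) (X : Fin n → EuclideanSpace ℝ (Fin d)) :
    0 ≤ kmeansOpt k X := by
  apply Real.sInf_nonneg
  rintro r ⟨C, -, rfl⟩
  exact kmeansCost_nonneg

lemma kmeansOpt_bddBelow (k : ℕ) (X : Fin n → EuclideanSpace ℝ (Fin d)) :
    BddBelow {r : ℝ | ∃ C : Finset (EuclideanSpace ℝ (Fin d)), C.card = k ∧ kmeansCost C X = r} := by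
  refine ⟨0, ?_⟩
  rintro r ⟨C, -, rfl⟩
  exact kmeansCost_nonneg

lemma kmeansOpt_le (hd : 1 ≤ d) {k : ℕ} {C : Finset (EuclideanSpace ℝ (Fin d))} (hCk : C.card = k)
    (X : Fin n → EuclideanSpace ℝ (Fin d)) : kmeansOpt k X ≤ kmeansCost C X :=
  csInf_le (kmeansOpt_bddBelow k X) ⟨C, hCk, rfl⟩

lemma exists_good_C (hd : 1 ≤ d) {k : ℕ} (X : Fin n → EuclideanSpace ℝ (Fin d)) {a : ℝ}
    (ha : kmeansOpt k X < a) :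
    ∃ C : Finset (EuclideanSpace ℝ (Fin d)), C.card = k ∧ kmeansCost C X < a := by
  have := (csInf_lt_iff (kmeansOpt_bddBelow k X) (kmeansOpt_set_nonempty hd k X)).mp ha
  obtain ⟨r, ⟨C, hCk, rfl⟩, hr⟩ := this
  exact ⟨C, hCk, hr⟩

end Basics

lemma covering_set_nonempty (d : ℕ) {δ : ℝ} (hδ : 0 < δ) :
    {m : ℕ | ∃ S : Finset (EuclideanSpace ℝ (Fin d)), S.card = m ∧
      (∀ p ∈ S, ‖p‖ = 1) ∧
      ∀ x : EuclideanSpace ℝ (Fin d), ‖x‖ = 1 → ∃ s ∈ S, dist x s ≤ δ}.Nonempty := by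
  have hcomp : IsCompact (Metric.sphere (0 : EuclideanSpace ℝ (Fin d)) 1) := isCompact_sphere _ _
  have hcover : Metric.sphere (0 : EuclideanSpace ℝ (Fin d)) 1 ⊆
      ⋃ x ∈ Metric.sphere (0 : EuclideanSpace ℝ (Fin d)) 1, Metric.ball x δ := by
    intro x hx
    exact Set.mem_biUnion hx (Metric.mem_ball_self hδ)
  obtain ⟨b', hb'sub, hb'fin, hb'cov⟩ := hcomp.elim_finite_subcover_image
    (fun i _ => Metric.isOpen_ball) hcover
  refine ⟨hb'fin.toFinset.card, hb'fin.toFinset, rfl, ?_, ?_⟩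
  · intro p hp
    have := hb'sub (hb'fin.mem_toFinset.mp hp)
    exact mem_sphere_zero_iff_norm.mp this
  · intro x hx
    have hx' : x ∈ Metric.sphere (0 : EuclideanSpace ℝ (Fin d)) 1 := mem_sphere_zero_iff_norm.mpr hx
    obtain ⟨s, hs, hxs⟩ := Set.mem_iUnion₂.mp (hb'cov hx')
    exact ⟨s, hb'fin.mem_toFinset.mpr hs, le_of_lt hxs⟩

lemma exists_net (d : ℕ) {δ : ℝ} (hδ : 0 < δ) :
    ∃ S : Finset (EuclideanSpace ℝ (Fin d)), S.card = coveringNumber d δ ∧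
      (∀ p ∈ S, ‖p‖ = 1) ∧
      ∀ x : EuclideanSpace ℝ (Fin d), ‖x‖ = 1 → ∃ s ∈ S, dist x s ≤ δ :=
  Nat.sInf_mem (covering_set_nonempty d hδ)

lemma coveringNumber_pos (d : ℕ) (hd : 1 ≤ d) {δ : ℝ} (hδ : 0 < δ) :
    1 ≤ coveringNumber d δ := by
  obtain ⟨S, hcard, -, hcov⟩ := exists_net d hδ
  obtain ⟨s, hs, -⟩ := hcov (EuclideanSpace.single ⟨0, by omega⟩ (1:ℝ)) (by simp)
  rw [← hcard]
  exact Finset.card_pos.mpr ⟨s, hs⟩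

section P
variable {d n : ℕ} {X : Fin n → EuclideanSpace ℝ (Fin d)}

lemma pigeonhole_pos [DecidableEq (EuclideanSpace ℝ (Fin d))] {k : ℕ} (hk : 1 ≤ k)
    (hV : k + 1 ≤ (Finset.image X Finset.univ).card) :
    0 < kmeansOpt k X := by
  set V := Finset.image X Finset.univ with hVdef
  have hVoff : V.offDiag.Nonempty := by
    obtain ⟨a, ha, b, hb, hab⟩ := Finset.one_lt_card.mp (show 1 < V.card by omega)
    exact ⟨(a, b), Finset.mem_offDiag.mpr ⟨ha, hb, hab⟩⟩
  set dists := V.offDiag.image (fun p => dist p.1 p.2) with hdists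
  have hdne : dists.Nonempty := hVoff.image _
  set ρ := dists.min' hdne with hρ
  have hρpos : 0 < ρ := by
    obtain ⟨p, hp, hval⟩ := Finset.mem_image.mp (dists.min'_mem hdne)
    rw [Finset.mem_offDiag] at hp
    show 0 < dists.min' hdne
    rw [← hval]
    exact dist_pos.mpr hp.2.2
  have hρle : ∀ v ∈ V, ∀ w ∈ V, v ≠ w → ρ ≤ dist v w := by
    intro v hv w hw hvw
    exact dists.min'_le _ (Finset.mem_image.mpr ⟨(v, w), Finset.mem_offDiag.mpr ⟨hv, hw, hvw⟩, rfl⟩)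
  have key : ∀ C : Finset (EuclideanSpace ℝ (Fin d)), C.card = k →
      (ρ/2)^2 ≤ kmeansCost C X := by
    intro C hCk
    have hCne : C.Nonempty := Finset.card_pos.mp (by omega)
    have hfar : ∃ v ∈ V, ∀ cc ∈ C, ρ/2 ≤ dist v cc := by
      by_contra h
      push_neg at h
      choose φ hφC hφd using h
      have hinj : Set.InjOn (fun v => if hv : v ∈ V then φ v hv else hCne.choose) (V : Set _) := by
        intro v hv w hw hvw
        simp only [Finset.mem_coe] at hv hw
        simp only [dif_pos hv, dif_pos hw] at hvw
        by_contra hne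
        have h1 := hφd v hv
        have h2 := hφd w hw
        have := hρle v hv w hw hne
        have hdd : dist v w ≤ dist v (φ v hv) + dist w (φ w hw) := by
          rw [hvw]; exact dist_triangle_right v w (φ w hw)
        linarith
      have := Finset.card_le_card_of_injOn _ (fun v hv => by
        show (if h : v ∈ V then φ v h else hCne.choose) ∈ C
        rw [dif_pos (Finset.mem_coe.mp hv)]; exact hφC v hv) hinj
      omega
    obtain ⟨v, hv, hvfar⟩ := hfar
    rw [hVdef, Finset.mem_image] at hv
    obtain ⟨i0, -, hi0⟩ := hv
    have hterm : (ρ/2)^2 ≤ sInf ((fun c => dist (X i0) c ^ 2) '' (C : Set (EuclideanSpace ℝ (Fin d)))) := by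
      apply le_csInf ⟨_, Set.mem_image_of_mem _ hCne.choose_spec⟩
      rintro _ ⟨c, hc, rfl⟩
      have := hvfar c hc
      rw [← hi0] at this
      have h2 : (0:ℝ) ≤ ρ/2 := by linarith
      calc (ρ/2)^2 ≤ dist (X i0) c ^ 2 := by nlinarith [dist_nonneg (x := X i0) (y := c)]
        _ = _ := rfl
    calc (ρ/2)^2 ≤ sInf ((fun c => dist (X i0) c ^ 2) '' (C : Set (EuclideanSpace ℝ (Fin d)))) := hterm
      _ ≤ kmeansCost C X := Finset.single_le_sum (fun i _ => term_nonneg (X i)) (Finset.mem_univ i0)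
  have : (ρ/2)^2 ≤ kmeansOpt k X := by
    apply le_csInf
    · obtain ⟨C, hCsub, hCcard⟩ := Finset.exists_subset_card_eq (s := V) (n := k) (by omega)
      exact ⟨kmeansCost C X, C, hCcard, rfl⟩
    · rintro r ⟨C, hCk, rfl⟩
      exact key C hCk
  nlinarith
end P

lemma approx_dist {E : Type*} [NormedAddCommGroup E] [NormedSpace ℝ E] (x c s : E)
    (hs : ‖s‖ = 1) {D r δ : ℝ} (hDpos : 0 < D) (hrD : r ≤ D)
    (hus : dist (D⁻¹ • (x - c)) s ≤ δ) :
    dist x (c + r • s) ≤ D * δ + (D - r) := by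
  have hx : D • (D⁻¹ • (x - c)) = x - c := by
    rw [smul_smul, mul_inv_cancel₀ hDpos.ne', one_smul]
  have hsplit : x - (c + r • s) = D • (D⁻¹ • (x - c) - s) + (D - r) • s := by
    rw [smul_sub, hx, sub_smul]
    abel
  rw [dist_eq_norm, hsplit]
  calc ‖D • (D⁻¹ • (x - c) - s) + (D - r) • s‖
      ≤ ‖D • (D⁻¹ • (x - c) - s)‖ + ‖(D - r) • s‖ := norm_add_le _ _
    _ = |D| * ‖D⁻¹ • (x - c) - s‖ + |D - r| * ‖s‖ := by
        rw [norm_smul, norm_smul, Real.norm_eq_abs, Real.norm_eq_abs]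
    _ ≤ D * δ + (D - r) := by
        rw [hs, abs_of_pos hDpos, abs_of_nonneg (by linarith), mul_one]
        have : ‖D⁻¹ • (x - c) - s‖ ≤ δ := by rw [← dist_eq_norm]; exact hus
        nlinarith

lemma unit_dir {E : Type*} [NormedAddCommGroup E] [NormedSpace ℝ E] {x c : E} {D : ℝ}
    (hD : dist x c = D) (hDpos : 0 < D) : ‖D⁻¹ • (x - c)‖ = 1 := by
  rw [norm_smul, Real.norm_eq_abs, abs_inv, abs_of_pos hDpos, ← dist_eq_norm, hD,
    inv_mul_cancel₀ hDpos.ne']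

lemma quad_bound1 {w D δ e r0 ε : ℝ} (hw : w ≤ (D * δ + e)^2)
    (hδsq : δ^2 = ε/2) (hD : 0 ≤ D) (he0 : 0 ≤ e) (he : e ≤ r0) (hε : 0 ≤ ε) :
    w ≤ (3/5) * ε * D^2 + 12 * r0^2 := by
  nlinarith [sq_nonneg (D * δ - 10 * e), sq_nonneg D, mul_self_nonneg (D*δ)]

lemma quad_bound2 {w D δ γ r0 ε : ℝ} (hw : w ≤ (D * δ + γ * D)^2)
    (hδsq : δ^2 = ε/2) (hγsq : γ^2 = ε/256) (hD : 0 ≤ D) (hε : 0 ≤ ε) :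
    w ≤ (3/5) * ε * D^2 + 12 * r0^2 := by
  nlinarith [sq_nonneg (D * δ - 10 * (γ * D)), sq_nonneg D, sq_nonneg r0]

lemma small_bound {D r0 ε : ℝ} (h : D ≤ r0) (hD : 0 ≤ D) (hε : 0 ≤ ε) :
    D^2 ≤ (3/5) * ε * D^2 + 12 * r0^2 := by nlinarith

set_option maxHeartbeats 2000000 in

/-- upper bound for Euclidean k-means. There is a universal
constant `c > 0` such that for every `d ≥ 2`, `0 < ε ≤ 1`, `k ≥ 1` and every family
`X` of `n ≥ 2` points in `ℝ^d`, there is a finite set `ξ ⊆ ℝ^d` with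
`|ξ| ≤ c · N(S^{d-1}, √(ε/2)) · k · log n / √ε` and `Φ(ξ, X) ≤ ε · Δ_k(X)`. -/
theorem kmeans_upper_bound :
    ∃ c : ℝ, 0 < c ∧
      ∀ d : ℕ, 2 ≤ d →
      ∀ ε : ℝ, 0 < ε → ε ≤ 1 →
      ∀ k : ℕ, 1 ≤ k →
      ∀ n : ℕ, 2 ≤ n →
      ∀ X : Fin n → EuclideanSpace ℝ (Fin d),
        ∃ ξ : Finset (EuclideanSpace ℝ (Fin d)), ξ.Nonempty ∧
          (ξ.card : ℝ) ≤
            c * (coveringNumber d (Real.sqrt (ε / 2)) : ℝ) * k * Real.log n / Real.sqrt ε ∧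
          kmeansCost ξ X ≤ ε * kmeansOpt k X := by
  classical
  refine ⟨1000, by norm_num, ?_⟩
  intro d hd ε hε hε1 k hk n hn X
  have hd1 : 1 ≤ d := by omega
  set β := Real.sqrt ε with hβ
  have hβpos : 0 < β := Real.sqrt_pos.mpr hε
  have hβsq : β ^ 2 = ε := Real.sq_sqrt hε.le
  have hβ1 : β ≤ 1 := by
    rw [hβ, show (1:ℝ) = Real.sqrt 1 by simp]
    exact Real.sqrt_le_sqrt hε1
  set δ := Real.sqrt (ε / 2) with hδ
  have hδpos : 0 < δ := Real.sqrt_pos.mpr (by linarith)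
  have hδsq : δ ^ 2 = ε / 2 := Real.sq_sqrt (by linarith)
  set N := coveringNumber d δ with hN
  obtain ⟨S, hScard, hSunit, hScov⟩ := exists_net d hδpos
  have hN1 : 1 ≤ N := coveringNumber_pos d hd1 hδpos
  have hN1' : (1:ℝ) ≤ (N:ℝ) := by exact_mod_cast hN1
  have hlog2 : (0.6931471803 : ℝ) < Real.log 2 := Real.log_two_gt_d9
  have hlogn : Real.log 2 ≤ Real.log n := by
    apply Real.log_le_log (by norm_num)
    exact_mod_cast hn
  have hlognpos : 0 < Real.log n := by linarith
  set Δ := kmeansOpt k X with hΔ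
  have hΔ0 : 0 ≤ Δ := kmeansOpt_nonneg k X
  have hk0 : (0:ℝ) ≤ (k:ℝ) := Nat.cast_nonneg k
  have hkB : (k : ℝ) ≤ 1000 * (N:ℝ) * k * Real.log n / β := by
    rw [le_div_iff₀ hβpos]
    have h1 : (1:ℝ) ≤ 1000 * (N:ℝ) * Real.log n := by nlinarith
    nlinarith [mul_le_mul_of_nonneg_left h1 hk0]
  by_cases hV : (Finset.image X Finset.univ).card ≤ k
  · -- few distinct values: take all of them
    refine ⟨Finset.image X Finset.univ, ?_, ?_, ?_⟩
    · exact ⟨X ⟨0, by omega⟩, Finset.mem_image_of_mem X (Finset.mem_univ _)⟩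
    · calc ((Finset.image X Finset.univ).card : ℝ) ≤ (k:ℝ) := by exact_mod_cast hV
        _ ≤ _ := hkB
    · have hc0 : kmeansCost (Finset.image X Finset.univ) X ≤ ∑ _i : Fin n, (0:ℝ) := by
        apply kmeansCost_le_sum
        intro i
        exact ⟨X i, Finset.mem_image_of_mem X (Finset.mem_univ _), by simp⟩
      simp only [Finset.sum_const_zero] at hc0
      have := mul_nonneg hε.le hΔ0
      linarith
  · -- main construction
    have hΔpos : 0 < Δ := pigeonhole_pos hk (by omega)
    obtain ⟨C, hCk, hCcost⟩ := exists_good_C hd1 X (show Δ < (9/8) * Δ by linarith)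
    set P := kmeansCost C X with hP
    have hP0 : 0 ≤ P := kmeansCost_nonneg
    have hPΔ : Δ ≤ P := kmeansOpt_le hd1 hCk X
    have hPpos : 0 < P := lt_of_lt_of_le hΔpos hPΔ
    have hCne : C.Nonempty := Finset.card_pos.mp (by omega)
    have hn0 : (0:ℝ) < n := by positivity
    set r0 := Real.sqrt (ε * Δ / (64 * n)) with hr0
    have hr0pos : 0 < r0 := Real.sqrt_pos.mpr (by positivity)
    have hr0sq : r0 ^ 2 = ε * Δ / (64 * n) := Real.sq_sqrt (by positivity)
    set R0 := Real.sqrt (Δ / (64 * n)) with hR0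
    have hR0pos : 0 < R0 := Real.sqrt_pos.mpr (by positivity)
    have hR0sq : R0 ^ 2 = Δ / (64 * n) := Real.sq_sqrt (by positivity)
    have hr0R0 : r0 = β * R0 := by
      rw [hr0, hR0, hβ, ← Real.sqrt_mul hε.le]
      congr 1
      ring
    set γ := β / 16 with hγ
    have hγpos : 0 < γ := by positivity
    have hγ1 : γ ≤ 1 := by rw [hγ]; linarith
    set g := 1 + γ with hg
    have hg1 : 1 < g := by rw [hg]; linarith
    have hgpos : 0 < g := by linarith
    have hγsq : γ ^ 2 = ε / 256 := by rw [hγ, div_pow, hβsq]; norm_num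
    set J := ⌊1 / β⌋₊ with hJdef
    set M := ⌊Real.logb g (Real.sqrt P / R0)⌋₊ with hMdef
    set Rg : Finset ℝ := (Finset.range (J+1)).image (fun j : ℕ => (j:ℝ) * r0) ∪
      (Finset.range (M+1)).image (fun j => R0 * g ^ j) with hRg
    set ξ := C ∪ (C ×ˢ Rg ×ˢ S).image
      (fun q : EuclideanSpace ℝ (Fin d) × ℝ × EuclideanSpace ℝ (Fin d) => q.1 + q.2.1 • q.2.2)
      with hξ
    have hCsub : C ⊆ ξ := Finset.subset_union_left
    have hmemξ : ∀ c ∈ C, ∀ r ∈ Rg, ∀ s ∈ S, c + r • s ∈ ξ := by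
      intro c hc r hr s hs
      apply Finset.mem_union_right
      apply Finset.mem_image.mpr
      exact ⟨(c, r, s), by simp [Finset.mem_product, hc, hr, hs], rfl⟩
    refine ⟨ξ, hCne.mono hCsub, ?_, ?_⟩
    · -- cardinality bound
      have hcard : ξ.card ≤ k + k * ((J + 1) + (M + 1)) * N := by
        calc ξ.card ≤ C.card + ((C ×ˢ Rg ×ˢ S).image _).card := Finset.card_union_le _ _
          _ ≤ C.card + (C ×ˢ Rg ×ˢ S).card := by
              gcongr
              exact Finset.card_image_le
          _ = k + k * (Rg.card * S.card) := by
              rw [Finset.card_product, Finset.card_product, hCk]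
          _ ≤ k + k * (((J + 1) + (M + 1)) * N) := by
              gcongr
              · rw [hRg]
                refine le_trans (Finset.card_union_le _ _) (add_le_add ?_ ?_)
                · exact le_trans Finset.card_image_le (by simp)
                · exact le_trans Finset.card_image_le (by simp)
              · rw [hScard]
          _ = k + k * ((J + 1) + (M + 1)) * N := by ring
      have hJr : (J : ℝ) ≤ 1 / β := Nat.floor_le (by positivity)
      have hlogg : β / 32 ≤ Real.log g := by
        have h1 : 1 - g⁻¹ ≤ Real.log g := Real.one_sub_inv_le_log_of_pos hgpos
        have h2 : 1 - g⁻¹ = γ / g := by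
          field_simp
          rw [hg]; ring
        have h3 : γ / 2 ≤ γ / g :=
          div_le_div_of_nonneg_left hγpos.le hgpos (by rw [hg]; linarith)
        rw [h2] at h1
        rw [hγ] at h3
        linarith
      have hloggpos : 0 < Real.log g := by linarith [hβpos]
      have hMr : (M : ℝ) ≤ 144 * Real.log n / β := by
        have hsq72 : Real.sqrt P / R0 ≤ Real.sqrt (72 * n) := by
          rw [div_le_iff₀ hR0pos]
          have he : Real.sqrt (72 * n) * R0 = Real.sqrt (72 * n * (Δ / (64 * n))) := by
            rw [hR0, ← Real.sqrt_mul (by positivity)]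
          rw [he]
          apply Real.sqrt_le_sqrt
          have he2 : 72 * (n:ℝ) * (Δ / (64 * n)) = (9/8) * Δ := by
            field_simp
            ring
          rw [he2]
          linarith
        have hargpos : 0 < Real.sqrt P / R0 := by positivity
        have hmono : Real.logb g (Real.sqrt P / R0) ≤ Real.logb g (Real.sqrt (72 * n)) := by
          rw [Real.logb_le_logb hg1 hargpos (by positivity)]
          exact hsq72
        have h72n1 : (1:ℝ) ≤ Real.sqrt (72 * n) := by
          rw [show (1:ℝ) = Real.sqrt 1 by simp]
          apply Real.sqrt_le_sqrt
          have h2n : (2:ℝ) ≤ (n:ℝ) := by exact_mod_cast hn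
          linarith
        have hTnn : 0 ≤ Real.logb g (Real.sqrt (72 * n)) := Real.logb_nonneg hg1 h72n1
        have hfloor : (M : ℝ) ≤ Real.logb g (Real.sqrt (72 * n)) := by
          rw [hMdef]
          calc ((⌊Real.logb g (Real.sqrt P / R0)⌋₊ : ℕ) : ℝ)
              ≤ ((⌊Real.logb g (Real.sqrt (72 * n))⌋₊ : ℕ) : ℝ) := by
                exact_mod_cast Nat.floor_le_floor hmono
            _ ≤ _ := Nat.floor_le hTnn
        have hlsqrt : Real.log (Real.sqrt (72 * n)) = (Real.log 72 + Real.log n) / 2 := by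
          rw [Real.log_sqrt (by positivity), Real.log_mul (by norm_num) (by positivity)]
        have hlog72 : Real.log 72 ≤ 5 := by
          calc Real.log 72 ≤ Real.log 128 := Real.log_le_log (by norm_num) (by norm_num)
            _ = 7 * Real.log 2 := by
                rw [show (128:ℝ) = 2 ^ (7:ℕ) by norm_num, Real.log_pow]
                norm_num
            _ ≤ 5 := by linarith [Real.log_two_lt_d9]
        have hlog72' : Real.log 72 ≤ 8 * Real.log n := by linarith
        have hbound : Real.logb g (Real.sqrt (72 * n)) ≤ (4.5 * Real.log n) / (β / 32) := by
          rw [Real.logb, hlsqrt]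
          apply div_le_div₀ (by positivity) (by linarith) (by positivity) hlogg
        have heq : (4.5 * Real.log n) / (β / 32) = 144 * Real.log n / β := by
          field_simp
          ring
        rw [heq] at hbound
        linarith
      -- assemble the cardinality bound over ℝ
      have hcardR : (ξ.card : ℝ) ≤ (k:ℝ) + (k:ℝ) * ((J:ℝ) + (M:ℝ) + 2) * (N:ℝ) := by
        have h' : (ξ.card : ℝ) ≤ ((k + k * ((J + 1) + (M + 1)) * N : ℕ) : ℝ) :=
          Nat.cast_le.mpr hcard
        push_cast at h'
        linarith
      have hJ' : (J:ℝ) * β ≤ 1 := by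
        rw [← le_div_iff₀ hβpos]
        exact hJr
      have hM' : (M:ℝ) * β ≤ 144 * Real.log n := by
        rw [← le_div_iff₀ hβpos]
        exact hMr
      have hJMr : (J:ℝ) + (M:ℝ) + 3 ≤ 1000 * Real.log n / β := by
        rw [le_div_iff₀ hβpos]
        have h3β : 3 * β ≤ 3 := by linarith
        linarith [hJ', hM', hlogn, hlog2]
      have hstep : (k:ℝ) + (k:ℝ) * ((J:ℝ) + (M:ℝ) + 2) * (N:ℝ) ≤
          (k:ℝ) * (N:ℝ) * ((J:ℝ) + (M:ℝ) + 3) := by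
        have hJ0 : (0:ℝ) ≤ (J:ℝ) := Nat.cast_nonneg _
        have hM0 : (0:ℝ) ≤ (M:ℝ) := Nat.cast_nonneg _
        have hkey : (k:ℝ) * (N:ℝ) * ((J:ℝ) + (M:ℝ) + 3) -
            ((k:ℝ) + (k:ℝ) * ((J:ℝ) + (M:ℝ) + 2) * (N:ℝ)) =
            (k:ℝ) * ((N:ℝ) - 1) := by ring
        have h1 : 0 ≤ (k:ℝ) * ((N:ℝ) - 1) := mul_nonneg hk0 (by linarith)
        linarith
      have hstep2 : (k:ℝ) * (N:ℝ) * ((J:ℝ) + (M:ℝ) + 3) ≤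
          (k:ℝ) * (N:ℝ) * (1000 * Real.log n / β) :=
        mul_le_mul_of_nonneg_left hJMr (by positivity)
      have hfin : (k:ℝ) * (N:ℝ) * (1000 * Real.log n / β) =
          1000 * (N:ℝ) * (k:ℝ) * Real.log n / β := by ring
      rw [hN]
      rw [hN] at hfin
      linarith
    · -- cost bound
      set f : Fin n → ℝ := fun i =>
        (3/5) * ε * sInf ((fun c => dist (X i) c ^ 2) '' (C : Set (EuclideanSpace ℝ (Fin d))))
          + 12 * r0 ^ 2 with hf
      have hcost : kmeansCost ξ X ≤ ∑ i, f i := by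
        apply kmeansCost_le_sum
        intro i
        obtain ⟨ci, hci, hDsq⟩ := exists_nearest hCne (X i)
        set D := dist (X i) ci with hD
        have hD0 : (0:ℝ) ≤ D := dist_nonneg
        have hfi : f i = (3/5) * ε * D^2 + 12 * r0^2 := by
          simp only [hf]
          rw [hDsq]
        by_cases hsmall : D ≤ r0
        · refine ⟨ci, hCsub hci, ?_⟩
          rw [hfi]
          exact small_bound hsmall hD0 hε.le
        · push_neg at hsmall
          have hDpos : 0 < D := lt_trans hr0pos hsmall
          set u := D⁻¹ • (X i - ci) with hu
          have huu : ‖u‖ = 1 := unit_dir hD.symm hDpos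
          obtain ⟨s, hsS, hus⟩ := hScov u huu
          have hs1 := hSunit s hsS
          by_cases hmid : D ≤ R0
          · -- middle regime: additive grid
            set j := ⌊D / r0⌋₊ with hj
            have hj1 : (j:ℝ) ≤ D / r0 := Nat.floor_le (by positivity)
            have hj2 : D / r0 < (j:ℝ) + 1 := Nat.lt_floor_add_one _
            have hjJ : j ≤ J := by
              apply Nat.floor_le_floor
              rw [div_le_div_iff₀ hr0pos hβpos]
              have := mul_le_mul_of_nonneg_right hmid hβpos.le
              have h' : r0 = β * R0 := hr0R0
              linarith
            set r := (j:ℝ) * r0 with hr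
            have hr0' : 0 ≤ r := by positivity
            have hrD : r ≤ D := by
              rw [hr]
              rw [← le_div_iff₀ hr0pos]
              exact hj1
            have hDr : D - r ≤ r0 := by
              rw [div_lt_iff₀ hr0pos] at hj2
              rw [hr]
              linarith
            have hrmem : r ∈ Rg := by
              rw [hRg]
              apply Finset.mem_union_left
              exact Finset.mem_image.mpr ⟨j, Finset.mem_range.mpr (Nat.lt_succ_of_le hjJ), rfl⟩
            refine ⟨ci + r • s, hmemξ ci hci r hrmem s hsS, ?_⟩
            have hdist : dist (X i) (ci + r • s) ≤ D * δ + (D - r) :=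
              approx_dist (X i) ci s hs1 hDpos hrD hus
            have hsq : dist (X i) (ci + r • s) ^ 2 ≤ (D * δ + (D - r))^2 :=
              pow_le_pow_left₀ dist_nonneg hdist 2
            rw [hfi]
            have hDr0 : 0 ≤ D - r := by linarith
            exact quad_bound1 hsq hδsq hD0 hDr0 hDr hε.le
          · -- outer regime: geometric grid
            push_neg at hmid
            have hDsqP : D ^ 2 ≤ P := by
              have h1 : sInf ((fun c => dist (X i) c ^ 2) '' (C : Set (EuclideanSpace ℝ (Fin d)))) ≤ P :=
                Finset.single_le_sum (fun i _ => term_nonneg (X i)) (Finset.mem_univ i)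
              rw [hDsq] at h1
              exact h1
            have hDle : D ≤ Real.sqrt P := by
              have := Real.sqrt_le_sqrt hDsqP
              rwa [Real.sqrt_sq hD0] at this
            have hDR0 : 1 ≤ D / R0 := by
              rw [le_div_iff₀ hR0pos]
              linarith
            set j := ⌊Real.logb g (D / R0)⌋₊ with hj
            have hlb0 : 0 ≤ Real.logb g (D / R0) := Real.logb_nonneg hg1 hDR0
            have hj1 : (j:ℝ) ≤ Real.logb g (D / R0) := Nat.floor_le hlb0
            have hj2 : Real.logb g (D / R0) < (j:ℝ) + 1 := Nat.lt_floor_add_one _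
            have hgj_le : g ^ j ≤ D / R0 := by
              have h1 : (g:ℝ) ^ ((j:ℕ):ℝ) ≤ g ^ Real.logb g (D / R0) :=
                (Real.rpow_le_rpow_left_iff hg1).mpr hj1
              rw [Real.rpow_logb hgpos hg1.ne' (by positivity), Real.rpow_natCast] at h1
              exact h1
            have hgj_ge : D / R0 ≤ g ^ (j+1) := by
              have h1 : (g:ℝ) ^ Real.logb g (D / R0) ≤ g ^ (((j+1:ℕ)):ℝ) := by
                apply (Real.rpow_le_rpow_left_iff hg1).mpr
                push_cast
                linarith
              rw [Real.rpow_logb hgpos hg1.ne' (by positivity), Real.rpow_natCast] at h1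
              exact h1
            set r := R0 * g ^ j with hr
            have hrpos : 0 < r := by positivity
            have hrD : r ≤ D := by
              rw [hr]
              calc R0 * g ^ j ≤ R0 * (D / R0) :=
                    mul_le_mul_of_nonneg_left hgj_le hR0pos.le
                _ = D := by field_simp
            have hDgr : D ≤ r * g := by
              have h1 : D ≤ R0 * g ^ (j+1) := by
                rw [div_le_iff₀ hR0pos] at hgj_ge
                linarith
              rw [hr]
              calc D ≤ R0 * g ^ (j+1) := h1
                _ = R0 * g ^ j * g := by rw [pow_succ]; ring
            have hDr : D - r ≤ γ * D := by
              have h1 : r * g = r + r * γ := by rw [hg]; ring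
              have h2 : r * γ ≤ D * γ := mul_le_mul_of_nonneg_right hrD hγpos.le
              linarith
            have hjM : j ≤ M := by
              apply Nat.floor_le_floor
              rw [Real.logb_le_logb hg1 (by positivity) (by positivity)]
              gcongr
            have hrmem : r ∈ Rg := by
              rw [hRg]
              apply Finset.mem_union_right
              exact Finset.mem_image.mpr ⟨j, Finset.mem_range.mpr (Nat.lt_succ_of_le hjM), rfl⟩
            refine ⟨ci + r • s, hmemξ ci hci r hrmem s hsS, ?_⟩
            have hdist : dist (X i) (ci + r • s) ≤ D * δ + (D - r) :=
              approx_dist (X i) ci s hs1 hDpos hrD hus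
            have hdist2 : dist (X i) (ci + r • s) ≤ D * δ + γ * D := by linarith
            have hsq : dist (X i) (ci + r • s) ^ 2 ≤ (D * δ + γ * D)^2 := by
              apply pow_le_pow_left₀ dist_nonneg ?_ 2
              linarith
            rw [hfi]
            exact quad_bound2 hsq hδsq hγsq hD0 hε.le
      have hsum : ∑ i, f i = (3/5) * ε * P + n * (12 * r0 ^ 2) := by
        rw [hf]
        rw [Finset.sum_add_distrib, ← Finset.mul_sum]
        congr 1
        rw [Finset.sum_const, Finset.card_univ, Fintype.card_fin, nsmul_eq_mul]
      have hnr0 : (n:ℝ) * (12 * r0 ^ 2) = 12 * (ε * Δ) / 64 := by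
        rw [hr0sq]
        field_simp
      have hfinal : (3/5) * ε * P + (n:ℝ) * (12 * r0 ^ 2) ≤ ε * Δ := by
        rw [hnr0]
        have h1 : (3/5) * ε * P ≤ (3/5) * ε * (9/8 * Δ) :=
          mul_le_mul_of_nonneg_left hCcost.le (by linarith)
        have h2 : 0 ≤ ε * Δ := mul_nonneg hε.le hΔ0
        linarith
      calc kmeansCost ξ X ≤ ∑ i, f i := hcost
        _ ≤ ε * Δ := by rw [hsum]; exact hfinal
end

section
/- There is a universal constant c > 0 such that the following holds. Let d ≥ 2 and let N(S^{d-1}, δ) denote the covering number of the unit sphere in ℝ^d at scale δ. For every ε with 0 < ε ≤ 1, every integer k ≥ 1, and every finite family X of n ≥ 2 points in ℝ^d, there exists a finite set ξ ⊆ ℝ^d with |ξ| ≤ c · N(S^{d-1}, ε/2) · k · (log n)/ε such that the k-median cost satisfies Φ(ξ, X) ≤ ε · Δ_k(X). -/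
open Finset

/-- Euclidean k-median cost of a family `X : Fin n → ℝ^d` with respect to a finite
(nonempty) center set `C ⊆ ℝ^d`: `Φ(C, X) = Σ_i min_{c ∈ C} ‖X i − c‖`. -/
noncomputable def kmedianCost {d n : ℕ} (C : Finset (EuclideanSpace ℝ (Fin d)))
    (X : Fin n → EuclideanSpace ℝ (Fin d)) : ℝ :=
  ∑ i, sInf ((fun c => dist (X i) c) '' (C : Set (EuclideanSpace ℝ (Fin d))))

/-- Optimal k-median cost `Δ_k(X)`: infimum of `Φ(C, X)` over sets `C ⊆ ℝ^d`
with `|C| = k`. -/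
noncomputable def kmedianOpt {d n : ℕ} (k : ℕ) (X : Fin n → EuclideanSpace ℝ (Fin d)) : ℝ :=
  sInf {r : ℝ | ∃ C : Finset (EuclideanSpace ℝ (Fin d)), C.card = k ∧ kmedianCost C X = r}

noncomputable section

namespace KMedianAux

local instance {d : ℕ} : DecidableEq (EuclideanSpace ℝ (Fin d)) := Classical.decEq _

variable {d n k : ℕ}

lemma term_nonneg (C : Finset (EuclideanSpace ℝ (Fin d))) (x : EuclideanSpace ℝ (Fin d)) :
    0 ≤ sInf ((fun c => dist x c) '' (C : Set (EuclideanSpace ℝ (Fin d)))) :=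
  Real.sInf_nonneg (by rintro r ⟨c, -, rfl⟩; exact dist_nonneg)

lemma term_le (C : Finset (EuclideanSpace ℝ (Fin d))) (x c : EuclideanSpace ℝ (Fin d))
    (hc : c ∈ C) :
    sInf ((fun c => dist x c) '' (C : Set (EuclideanSpace ℝ (Fin d)))) ≤ dist x c :=
  csInf_le ⟨0, by rintro r ⟨c', -, rfl⟩; exact dist_nonneg⟩ ⟨c, hc, rfl⟩

lemma term_attained (C : Finset (EuclideanSpace ℝ (Fin d))) (hC : C.Nonempty)
    (x : EuclideanSpace ℝ (Fin d)) :
    ∃ c ∈ C, sInf ((fun c => dist x c) '' (C : Set (EuclideanSpace ℝ (Fin d)))) = dist x c := by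
  have h : sInf ((fun c => dist x c) '' (C : Set (EuclideanSpace ℝ (Fin d)))) ∈
      ((fun c => dist x c) '' (C : Set (EuclideanSpace ℝ (Fin d)))) :=
    Set.Nonempty.csInf_mem (hC.to_set.image _) (C.finite_toSet.image _)
  obtain ⟨c, hc, hc'⟩ := h
  exact ⟨c, hc, hc'.symm⟩

lemma cost_nonneg (C : Finset (EuclideanSpace ℝ (Fin d))) (X : Fin n → EuclideanSpace ℝ (Fin d)) :
    0 ≤ kmedianCost C X :=
  Finset.sum_nonneg fun i _ => term_nonneg C (X i)

lemma term_le_cost (C : Finset (EuclideanSpace ℝ (Fin d))) (X : Fin n → EuclideanSpace ℝ (Fin d))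
    (i : Fin n) :
    sInf ((fun c => dist (X i) c) '' (C : Set (EuclideanSpace ℝ (Fin d)))) ≤ kmedianCost C X :=
  Finset.single_le_sum (fun j _ => term_nonneg C (X j)) (mem_univ i)

lemma euclidean_infinite (hd : 2 ≤ d) : Infinite (EuclideanSpace ℝ (Fin d)) := by
  have hne : Nonempty (Fin d) := ⟨⟨0, by omega⟩⟩
  exact Infinite.of_injective
    (fun r : ℝ => (EuclideanSpace.single (Classical.arbitrary (Fin d)) r))
    (fun a b hab => by
      have := congrArg (fun v : EuclideanSpace ℝ (Fin d) => v (Classical.arbitrary (Fin d))) hab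
      simpa using this)

lemma opt_nonempty (hd : 2 ≤ d) (k : ℕ) (X : Fin n → EuclideanSpace ℝ (Fin d)) :
    {r : ℝ | ∃ C : Finset (EuclideanSpace ℝ (Fin d)), C.card = k ∧
      kmedianCost C X = r}.Nonempty := by
  have : Infinite (EuclideanSpace ℝ (Fin d)) := euclidean_infinite hd
  obtain ⟨C, hC⟩ := Infinite.exists_subset_card_eq (EuclideanSpace ℝ (Fin d)) k
  exact ⟨kmedianCost C X, C, hC, rfl⟩

lemma opt_nonneg (hd : 2 ≤ d) (k : ℕ) (X : Fin n → EuclideanSpace ℝ (Fin d)) :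
    0 ≤ kmedianOpt k X :=
  le_csInf (opt_nonempty hd k X) (by rintro r ⟨C, -, rfl⟩; exact cost_nonneg C X)

lemma opt_le (C : Finset (EuclideanSpace ℝ (Fin d))) (hC : C.card = k)
    (X : Fin n → EuclideanSpace ℝ (Fin d)) : kmedianOpt k X ≤ kmedianCost C X :=
  csInf_le ⟨0, by rintro r ⟨C', -, rfl⟩; exact cost_nonneg C' X⟩ ⟨C, hC, rfl⟩

lemma sphere_cover_exists (δ : ℝ) (hδ : 0 < δ) :
    ∃ S : Finset (EuclideanSpace ℝ (Fin d)), (∀ p ∈ S, ‖p‖ = 1) ∧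
      ∀ x : EuclideanSpace ℝ (Fin d), ‖x‖ = 1 → ∃ s ∈ S, dist x s ≤ δ := by
  set K : Set (EuclideanSpace ℝ (Fin d)) := Metric.sphere 0 1 with hK
  have hKc : IsCompact K := isCompact_sphere 0 1
  have hcov : K ⊆ ⋃ (x : K), Metric.ball (x : EuclideanSpace ℝ (Fin d)) δ := by
    intro x hx
    exact Set.mem_iUnion.2 ⟨⟨x, hx⟩, Metric.mem_ball_self hδ⟩
  obtain ⟨F, hF⟩ := hKc.elim_finite_subcover
    (fun x : K => Metric.ball (x : EuclideanSpace ℝ (Fin d)) δ)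
    (fun _ => Metric.isOpen_ball) hcov
  refine ⟨F.image (fun x : K => (x : EuclideanSpace ℝ (Fin d))), ?_, ?_⟩
  · rintro p hp
    obtain ⟨x, -, rfl⟩ := Finset.mem_image.1 hp
    simpa [K, mem_sphere_iff_norm] using x.2
  · intro x hx
    have hxK : x ∈ K := by simpa [K, mem_sphere_iff_norm] using hx
    obtain ⟨i, hi⟩ := Set.mem_iUnion.1 (hF hxK)
    simp only [Set.mem_iUnion, Metric.mem_ball] at hi
    obtain ⟨hiF, hdist⟩ := hi
    exact ⟨i, Finset.mem_image_of_mem _ hiF, hdist.le⟩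

lemma coveringNumber_spec (δ : ℝ) (hδ : 0 < δ) :
    ∃ S : Finset (EuclideanSpace ℝ (Fin d)), S.card = coveringNumber d δ ∧
      (∀ p ∈ S, ‖p‖ = 1) ∧
      ∀ x : EuclideanSpace ℝ (Fin d), ‖x‖ = 1 → ∃ s ∈ S, dist x s ≤ δ := by
  have hne : {m : ℕ | ∃ S : Finset (EuclideanSpace ℝ (Fin d)), S.card = m ∧
      (∀ p ∈ S, ‖p‖ = 1) ∧
      ∀ x : EuclideanSpace ℝ (Fin d), ‖x‖ = 1 → ∃ s ∈ S, dist x s ≤ δ}.Nonempty := by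
    obtain ⟨S, h1, h2⟩ := sphere_cover_exists (d := d) δ hδ
    exact ⟨S.card, S, rfl, h1, h2⟩
  exact Nat.sInf_mem hne

lemma log_one_add_ge (x : ℝ) (h0 : 0 ≤ x) (h1 : x ≤ 1) : x / 2 ≤ Real.log (1 + x) := by
  have hexp : Real.exp (x / 2) ≤ 1 + x := by
    have h2 : x / 2 < 1 := by linarith
    have hh := Real.add_one_le_exp (-(x / 2))
    have hpos : 0 < 1 - x / 2 := by linarith
    have hle : Real.exp (x / 2) ≤ 1 / (1 - x / 2) := by
      rw [le_div_iff₀ hpos]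
      calc Real.exp (x / 2) * (1 - x / 2) ≤ Real.exp (x / 2) * Real.exp (-(x / 2)) := by
            apply mul_le_mul_of_nonneg_left (by linarith) (Real.exp_pos _).le
        _ = 1 := by rw [← Real.exp_add]; simp
    refine hle.trans ?_
    rw [div_le_iff₀ hpos]
    nlinarith
  calc x / 2 = Real.log (Real.exp (x / 2)) := (Real.log_exp _).symm
    _ ≤ Real.log (1 + x) := Real.log_le_log (Real.exp_pos _) hexp

lemma opt_pos_of_many (hd : 2 ≤ d) (hk : 1 ≤ k) (X : Fin n → EuclideanSpace ℝ (Fin d))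
    (h : k < (univ.image X).card) : 0 < kmedianOpt k X := by
  set V := univ.image X with hV
  have hV2 : 1 < V.card := lt_of_le_of_lt hk h
  set D : Set ℝ := (fun p : (EuclideanSpace ℝ (Fin d)) × (EuclideanSpace ℝ (Fin d)) =>
      dist p.1 p.2) '' {p | p.1 ∈ V ∧ p.2 ∈ V ∧ p.1 ≠ p.2} with hD
  have hDfin : D.Finite := by
    apply Set.Finite.image
    apply Set.Finite.subset (Set.Finite.prod V.finite_toSet V.finite_toSet)
    rintro ⟨a, b⟩ ⟨ha, hb, -⟩
    exact ⟨ha, hb⟩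
  have hDne : D.Nonempty := by
    obtain ⟨a, ha, b, hb, hab⟩ := Finset.one_lt_card.1 hV2
    exact ⟨dist a b, ⟨(a, b), ⟨ha, hb, hab⟩, rfl⟩⟩
  set m := sInf D with hm
  have hmD : m ∈ D := Set.Nonempty.csInf_mem hDne hDfin
  have hmpos : 0 < m := by
    obtain ⟨⟨a, b⟩, ⟨-, -, hab⟩, hab'⟩ := hmD
    rw [← hab']
    exact dist_pos.2 hab
  have hmle : ∀ v ∈ V, ∀ w ∈ V, v ≠ w → m ≤ dist v w := by
    intro v hv w hw hvw
    exact csInf_le (hDfin.bddBelow) ⟨(v, w), ⟨hv, hw, hvw⟩, rfl⟩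
  have key : ∀ r ∈ {r : ℝ | ∃ C : Finset (EuclideanSpace ℝ (Fin d)), C.card = k ∧
      kmedianCost C X = r}, m / 2 ≤ r := by
    rintro r ⟨C, hCk, rfl⟩
    have hCne : C.Nonempty := Finset.card_pos.1 (hCk ▸ hk)
    choose f hf hfd using fun v : EuclideanSpace ℝ (Fin d) => term_attained C hCne v
    have hmaps : ∀ v ∈ V, f v ∈ C := fun v _ => hf v
    obtain ⟨v, hv, w, hw, hvw, hfvw⟩ :=
      Finset.exists_ne_map_eq_of_card_lt_of_maps_to (hCk ▸ h) hmaps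
    obtain ⟨i, -, hi⟩ := Finset.mem_image.1 hv
    obtain ⟨j, -, hj⟩ := Finset.mem_image.1 hw
    have hgv : dist v (f v) ≤ kmedianCost C X := by
      have := term_le_cost C X i
      rw [hi] at this
      exact (hfd v).symm.trans_le this
    have hgw : dist w (f w) ≤ kmedianCost C X := by
      have := term_le_cost C X j
      rw [hj] at this
      exact (hfd w).symm.trans_le this
    have hm1 : m ≤ dist v w := hmle v hv w hw hvw
    have htri : dist v w ≤ dist v (f v) + dist w (f w) := by
      calc dist v w ≤ dist v (f v) + dist (f v) w := dist_triangle _ _ _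
        _ = dist v (f v) + dist w (f w) := by rw [hfvw, dist_comm w (f w)]
    linarith
  have : m / 2 ≤ kmedianOpt k X := le_csInf (opt_nonempty hd k X) key
  linarith

lemma dist_to_shell (ε : ℝ) (c x : EuclideanSpace ℝ (Fin d)) (r : ℝ) (hr : 0 ≤ r)
    (hd0 : 0 < dist x c)
    (S : Finset (EuclideanSpace ℝ (Fin d)))
    (hcov : ∀ y : EuclideanSpace ℝ (Fin d), ‖y‖ = 1 → ∃ s ∈ S, dist y s ≤ ε / 2)
    (hrle : r ≤ dist x c) :
    ∃ s ∈ S, dist x (c + r • s) ≤ (dist x c - r) + r * (ε / 2) := by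
  set dd := dist x c with hdd
  set u : EuclideanSpace ℝ (Fin d) := dd⁻¹ • (x - c) with hu
  have hune : ‖u‖ = 1 := by
    rw [hu, norm_smul, norm_inv, Real.norm_eq_abs, abs_of_pos hd0, ← dist_eq_norm]
    field_simp [hdd]
    exact hdd.symm
  obtain ⟨s, hsS, hus⟩ := hcov u hune
  refine ⟨s, hsS, ?_⟩
  have hxc : x - c = dd • u := by
    rw [hu, smul_smul]
    rw [mul_inv_cancel₀ (ne_of_gt hd0), one_smul]
  have h1 : dist x (c + r • s) = ‖(x - c) - r • s‖ := by
    rw [dist_eq_norm]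
    congr 1
    abel
  rw [h1, hxc]
  calc ‖dd • u - r • s‖ ≤ ‖dd • u - r • u‖ + ‖r • u - r • s‖ :=
        norm_sub_le_norm_sub_add_norm_sub (dd • u) (r • u) (r • s)
    _ = |dd - r| * ‖u‖ + r * ‖u - s‖ := by
        rw [← sub_smul, ← smul_sub, norm_smul (dd - r) u, norm_smul r (u - s),
          Real.norm_eq_abs, Real.norm_eq_abs, abs_of_nonneg hr]
    _ ≤ (dd - r) * 1 + r * (ε / 2) := by
        have h2 : |dd - r| = dd - r := abs_of_nonneg (by linarith)
        rw [h2, hune]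
        have h3 : ‖u - s‖ ≤ ε / 2 := by rw [← dist_eq_norm]; exact hus
        have hge : (0:ℝ) ≤ dd - r := by linarith
        nlinarith
    _ = (dd - r) + r * (ε / 2) := by ring

lemma radius_select (ε t A : ℝ) (n : ℕ) (hε : 0 < ε) (ht : 0 < t)
    (hA : A = 4 * n * t) (s : ℝ) (hs0 : 0 ≤ s) (hsA : s ≤ A) :
    ∃ r ∈ ((Finset.range (⌊8/ε⌋₊ + 1)).image (fun j : ℕ => (j:ℝ) * (ε * t / 8))) ∪
        ((Finset.range (⌊Real.log (4*n) / Real.log (1+ε/8)⌋₊ + 1)).image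
          (fun j : ℕ => t * (1+ε/8)^j)),
      0 ≤ r ∧ r ≤ s ∧ s - r ≤ ε / 8 * (t + s) := by
  by_cases hst : s ≤ t
  · set δ := ε * t / 8 with hδ
    have hδpos : 0 < δ := by positivity
    set j := ⌊s / δ⌋₊ with hj
    have hjle : (j:ℝ) ≤ s / δ := by rw [hj]; exact Nat.floor_le (by positivity)
    have hjgt : s / δ < (j:ℝ) + 1 := by rw [hj]; exact Nat.lt_floor_add_one _
    have hrs : (j:ℝ) * δ ≤ s := by
      have := mul_le_mul_of_nonneg_right hjle hδpos.le
      rwa [div_mul_cancel₀ s hδpos.ne'] at this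
    have hsr : s - (j:ℝ) * δ ≤ δ := by
      have := mul_lt_mul_of_pos_right hjgt hδpos
      rw [div_mul_cancel₀ s hδpos.ne'] at this
      nlinarith
    refine ⟨(j:ℝ) * δ, Finset.mem_union_left _ (Finset.mem_image.2 ⟨j, ?_, rfl⟩), by positivity,
      hrs, ?_⟩
    · rw [Finset.mem_range, Nat.lt_succ_iff, hj]
      apply Nat.floor_le_floor
      rw [hδ, div_le_div_iff₀ (by positivity) hε]
      nlinarith
    · calc s - (j:ℝ) * δ ≤ δ := hsr
        _ = ε / 8 * t := by rw [hδ]; ring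
        _ ≤ ε / 8 * (t + s) := by nlinarith
  · push_neg at hst
    set b := 1 + ε / 8 with hb
    have hb1 : 1 < b := by rw [hb]; linarith
    have hlb : 0 < Real.log b := Real.log_pos hb1
    have hst' : 1 ≤ s / t := by rw [le_div_iff₀ ht]; linarith
    have hlst : 0 ≤ Real.log (s / t) := Real.log_nonneg hst'
    set j := ⌊Real.log (s / t) / Real.log b⌋₊ with hj
    have hjle : (j:ℝ) ≤ Real.log (s / t) / Real.log b := by
      rw [hj]; exact Nat.floor_le (by positivity)
    have hjgt : Real.log (s / t) / Real.log b < (j:ℝ) + 1 := by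
      rw [hj]; exact Nat.lt_floor_add_one _
    have hrle : t * b ^ j ≤ s := by
      have h1 : Real.log (b ^ j) ≤ Real.log (s / t) := by
        rw [Real.log_pow]
        calc (j:ℝ) * Real.log b ≤ Real.log (s/t) / Real.log b * Real.log b :=
              mul_le_mul_of_nonneg_right hjle hlb.le
          _ = Real.log (s/t) := div_mul_cancel₀ _ hlb.ne'
      have hpow : b ^ j ≤ s / t := (Real.log_le_log_iff (by positivity) (by positivity)).1 h1
      calc t * b ^ j ≤ t * (s / t) := by nlinarith
        _ = s := mul_div_cancel₀ s ht.ne'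
    have hlt : s < t * b ^ (j + 1) := by
      have h3 : Real.log (s / t) < ((j:ℝ) + 1) * Real.log b := by
        have := mul_lt_mul_of_pos_right hjgt hlb
        rwa [div_mul_cancel₀ _ hlb.ne'] at this
      have h4 : Real.log (s / t) < Real.log (b ^ (j + 1)) := by
        rw [Real.log_pow]; push_cast; linarith
      have h5 : s / t < b ^ (j + 1) := (Real.log_lt_log_iff (by positivity) (by positivity)).1 h4
      calc s = t * (s / t) := (mul_div_cancel₀ s ht.ne').symm
        _ < t * b ^ (j + 1) := by nlinarith
    refine ⟨t * b ^ j, Finset.mem_union_right _ (Finset.mem_image.2 ⟨j, ?_, rfl⟩), by positivity,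
      hrle, ?_⟩
    · rw [Finset.mem_range, Nat.lt_succ_iff, hj]
      apply Nat.floor_le_floor
      have hsle : Real.log (s / t) ≤ Real.log (4 * n) := by
        apply Real.log_le_log (by positivity)
        rw [div_le_iff₀ ht]
        rw [hA] at hsA
        linarith
      rw [hb] at hlb ⊢
      exact div_le_div_of_nonneg_right hsle hlb.le
    · have h7 : s - t * b ^ j ≤ ε / 8 * (t * b ^ j) := by
        have heq : t * b ^ (j+1) = t * b ^ j + ε / 8 * (t * b ^ j) := by
          rw [pow_succ, hb]; ring
        linarith
      calc s - t * b ^ j ≤ ε / 8 * (t * b ^ j) := h7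
        _ ≤ ε / 8 * s := by nlinarith
        _ ≤ ε / 8 * (t + s) := by nlinarith

end KMedianAux

end

set_option maxHeartbeats 1000000 in
/-- upper bound for Euclidean k-median. There is a universal
constant `c > 0` such that for every `d ≥ 2`, `0 < ε ≤ 1`, `k ≥ 1` and every family
`X` of `n ≥ 2` points in `ℝ^d`, there is a finite set `ξ ⊆ ℝ^d` with
`|ξ| ≤ c · N(S^{d-1}, ε/2) · k · log n / ε` and `Φ(ξ, X) ≤ ε · Δ_k(X)`. -/
theorem kmedian_upper_bound :
    ∃ c : ℝ, 0 < c ∧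
      ∀ d : ℕ, 2 ≤ d →
      ∀ ε : ℝ, 0 < ε → ε ≤ 1 →
      ∀ k : ℕ, 1 ≤ k →
      ∀ n : ℕ, 2 ≤ n →
      ∀ X : Fin n → EuclideanSpace ℝ (Fin d),
        ∃ ξ : Finset (EuclideanSpace ℝ (Fin d)), ξ.Nonempty ∧
          (ξ.card : ℝ) ≤ c * (coveringNumber d (ε / 2) : ℝ) * k * Real.log n / ε ∧
          kmedianCost ξ X ≤ ε * kmedianOpt k X := by
  classical
  refine ⟨100, by norm_num, ?_⟩
  intro d hd ε hε hε1 k hk n hn X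
  have := KMedianAux.euclidean_infinite hd
  letI : DecidableEq (EuclideanSpace ℝ (Fin d)) := Classical.decEq _
  set N : ℕ := coveringNumber d (ε / 2) with hN
  obtain ⟨S, hScard, hSnorm, hScov⟩ := KMedianAux.coveringNumber_spec (d := d) (ε / 2)
    (by positivity)
  -- the sphere is nonempty, so the cover is nonempty
  have hSne : S.Nonempty := by
    have h1 : ‖(EuclideanSpace.single (⟨0, by omega⟩ : Fin d) (1:ℝ))‖ = 1 := by
      rw [EuclideanSpace.norm_single]; norm_num
    obtain ⟨s, hs, -⟩ := hScov _ h1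
    exact ⟨s, hs⟩
  have hN1 : 1 ≤ N := by
    rw [hN, ← hScard]
    exact Finset.card_pos.2 hSne
  have hN1' : (1:ℝ) ≤ (N:ℝ) := by exact_mod_cast hN1
  have hk1 : (1:ℝ) ≤ (k:ℝ) := by exact_mod_cast hk
  have hn2 : (2:ℝ) ≤ (n:ℝ) := by exact_mod_cast hn
  set L : ℝ := Real.log n with hL
  have hLhalf : (1:ℝ)/2 ≤ L := by
    have h2 : Real.log 2 ≤ L := Real.log_le_log (by norm_num) hn2
    have := Real.log_two_gt_d9
    linarith
  have hLpos : 0 < L := by linarith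
  by_cases hmany : k < (univ.image X).card
  · -- main case: optimum is positive
    have hΔpos : 0 < kmedianOpt k X := KMedianAux.opt_pos_of_many hd hk X hmany
    set Δ := kmedianOpt k X with hΔ
    obtain ⟨A, hAmem, hAlt⟩ := exists_lt_of_csInf_lt (KMedianAux.opt_nonempty hd k X)
      (show Δ < Δ + Δ / 4 by linarith)
    obtain ⟨C, hCk, hCA⟩ := hAmem
    have hAge : Δ ≤ A := hCA ▸ KMedianAux.opt_le C hCk X
    have hApos : 0 < A := lt_of_lt_of_le hΔpos hAge
    have hCne : C.Nonempty := Finset.card_pos.1 (hCk ▸ hk)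
    set t : ℝ := A / (4 * n) with ht
    have htpos : 0 < t := by rw [ht]; positivity
    have hA4 : A = 4 * n * t := by rw [ht]; field_simp
    set R : Finset ℝ :=
      ((Finset.range (⌊8/ε⌋₊ + 1)).image (fun j : ℕ => (j:ℝ) * (ε * t / 8))) ∪
        ((Finset.range (⌊Real.log (4*n) / Real.log (1+ε/8)⌋₊ + 1)).image
          (fun j : ℕ => t * (1+ε/8)^j)) with hR
    set ξ : Finset (EuclideanSpace ℝ (Fin d)) :=
      C ∪ (C ×ˢ (R ×ˢ S)).image (fun p => p.1 + p.2.1 • p.2.2) with hξ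
    have hCsub : C ⊆ ξ := Finset.subset_union_left
    refine ⟨ξ, hCne.mono hCsub, ?_, ?_⟩
    · -- cardinality bound
      set J0 : ℕ := ⌊8/ε⌋₊ with hJ0def
      set J1 : ℕ := ⌊Real.log (4*n) / Real.log (1+ε/8)⌋₊ with hJ1def
      have hRcard : R.card ≤ (J0 + 1) + (J1 + 1) := by
        rw [hR]
        refine le_trans (Finset.card_union_le _ _) ?_
        have h1 := Finset.card_image_le (s := Finset.range (J0 + 1))
          (f := fun j : ℕ => (j:ℝ) * (ε * t / 8))
        have h2 := Finset.card_image_le (s := Finset.range (J1 + 1))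
          (f := fun j : ℕ => t * (1+ε/8)^j)
        rw [Finset.card_range] at h1 h2
        omega
      have hξcard : ξ.card ≤ k + k * (((J0 + 1) + (J1 + 1)) * N) := by
        rw [hξ]
        refine le_trans (Finset.card_union_le _ _) ?_
        have h1 : ((C ×ˢ (R ×ˢ S)).image
            (fun p : _ × ℝ × _ => p.1 + p.2.1 • p.2.2)).card ≤ k * (((J0+1)+(J1+1)) * N) := by
          refine le_trans Finset.card_image_le ?_
          rw [Finset.card_product, Finset.card_product, hCk, hScard, ← hN]
          have : R.card * N ≤ ((J0+1)+(J1+1)) * N := Nat.mul_le_mul_right _ hRcard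
          exact Nat.mul_le_mul_left _ this
        rw [hCk]
        omega
      have ha : (J0:ℝ) * ε ≤ 8 := by
        have h1 : (J0:ℝ) ≤ 8 / ε := Nat.floor_le (by positivity)
        calc (J0:ℝ) * ε ≤ 8 / ε * ε := by nlinarith
          _ = 8 := by field_simp
      have hb : (J1:ℝ) * ε ≤ 48 * L := by
        have hlog4n : Real.log (4*n) ≤ 3 * L := by
          rw [Real.log_mul (by norm_num) (by positivity)]
          have h41 : Real.log 4 = 2 * Real.log 2 := by
            rw [show (4:ℝ) = 2^2 by norm_num, Real.log_pow]
            push_cast; ring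
          have h42 : Real.log 2 ≤ L := Real.log_le_log (by norm_num) hn2
          rw [h41, ← hL]
          linarith
        have hlb : ε / 16 ≤ Real.log (1+ε/8) := by
          have := KMedianAux.log_one_add_ge (ε/8) (by positivity) (by linarith)
          linarith
        have h1 : (J1:ℝ) ≤ Real.log (4*n) / Real.log (1+ε/8) :=
          Nat.floor_le (div_nonneg (Real.log_nonneg (by nlinarith)) (by linarith))
        have h2 : Real.log (4*n) / Real.log (1+ε/8) ≤ (3 * L) / (ε / 16) :=
          div_le_div₀ (by positivity) hlog4n (by positivity) hlb
        have h3 : (3 * L) / (ε / 16) = 48 * L / ε := by field_simp; ring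
        have h4 : (J1:ℝ) ≤ 48 * L / ε := by rw [← h3]; exact h1.trans h2
        calc (J1:ℝ) * ε ≤ 48 * L / ε * ε := by nlinarith
          _ = 48 * L := by field_simp
      have hcast : (ξ.card : ℝ) ≤ (k:ℝ) + k * ((((J0:ℝ) + 1) + ((J1:ℝ) + 1)) * N) := by
        have := hξcard
        have h0 : ((k + k * (((J0 + 1) + (J1 + 1)) * N) : ℕ) : ℝ)
            = (k:ℝ) + k * ((((J0:ℝ) + 1) + ((J1:ℝ) + 1)) * N) := by push_cast; ring
        rw [← h0]
        exact_mod_cast this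
      rw [le_div_iff₀ hε]
      have hkN : (0:ℝ) ≤ (k:ℝ) * N := by positivity
      calc (ξ.card : ℝ) * ε
          ≤ ((k:ℝ) + k * ((((J0:ℝ) + 1) + ((J1:ℝ) + 1)) * N)) * ε := by
            exact mul_le_mul_of_nonneg_right hcast hε.le
        _ = (k:ℝ) * ε + (k * N) * ((J0:ℝ) * ε) + (k * N) * ((J1:ℝ) * ε)
            + (k * N) * (2 * ε) := by ring
        _ ≤ (k:ℝ) * 1 + (k * N) * 8 + (k * N) * (48 * L) + (k * N) * (2 * 1) := by
            have hy1 : (k:ℝ) * ε ≤ (k:ℝ) * 1 := by nlinarith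
            have hy2 : (k:ℝ) * N * ((J0:ℝ) * ε) ≤ (k:ℝ) * N * 8 := by nlinarith
            have hy3 : (k:ℝ) * N * ((J1:ℝ) * ε) ≤ (k:ℝ) * N * (48 * L) := by nlinarith
            have hy4 : (k:ℝ) * N * (2 * ε) ≤ (k:ℝ) * N * (2 * 1) := by nlinarith
            linarith
        _ ≤ (k * N) * (2 * L) + (k * N) * (16 * L) + (k * N) * (48 * L)
            + (k * N) * (4 * L) := by
            have hx1 : (k:ℝ) * 1 ≤ (k * N) * (2 * L) := by nlinarith
            have hx2 : (k:ℝ) * N * 8 ≤ (k * N) * (16 * L) := by nlinarith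
            have hx3 : (k:ℝ) * N * (2*1) ≤ (k * N) * (4 * L) := by nlinarith
            linarith
        _ = 70 * ((k:ℝ) * N * L) := by ring
        _ ≤ 100 * (N:ℝ) * k * L := by nlinarith
    · -- cost bound
      have hsumC : ∑ i, sInf ((fun c => dist (X i) c) '' (C : Set (EuclideanSpace ℝ (Fin d))))
          = A := hCA
      have hpoint : ∀ i : Fin n,
          sInf ((fun c => dist (X i) c) '' (ξ : Set (EuclideanSpace ℝ (Fin d)))) ≤
            5/8 * ε * (t + sInf ((fun c => dist (X i) c) ''
              (C : Set (EuclideanSpace ℝ (Fin d))))) := by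
        intro i
        obtain ⟨ci, hciC, hci⟩ := KMedianAux.term_attained C hCne (X i)
        by_cases h0 : dist (X i) ci = 0
        · have h1 := KMedianAux.term_le ξ (X i) ci (hCsub hciC)
          rw [h0] at h1
          have h2 := KMedianAux.term_nonneg C (X i)
          nlinarith
        · have hdpos : 0 < dist (X i) ci := lt_of_le_of_ne dist_nonneg (Ne.symm h0)
          have hdA : dist (X i) ci ≤ A := by
            calc dist (X i) ci
                = sInf ((fun c => dist (X i) c) '' (C : Set (EuclideanSpace ℝ (Fin d)))) :=
                  hci.symm
              _ ≤ kmedianCost C X := KMedianAux.term_le_cost C X i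
              _ = A := hCA
          obtain ⟨r, hrR, hr0, hrle, hrgap⟩ := KMedianAux.radius_select ε t A n hε htpos hA4
            (dist (X i) ci) dist_nonneg hdA
          obtain ⟨s, hsS, hds⟩ := KMedianAux.dist_to_shell ε ci (X i) r hr0 hdpos S hScov hrle
          have hmem : ci + r • s ∈ ξ := by
            rw [hξ]
            apply Finset.mem_union_right
            refine Finset.mem_image.2 ⟨(ci, (r, s)), ?_, rfl⟩
            rw [Finset.mem_product, Finset.mem_product]
            exact ⟨hciC, hrR, hsS⟩
          have h1 := KMedianAux.term_le ξ (X i) _ hmem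
          rw [hci]
          calc sInf ((fun c => dist (X i) c) '' (ξ : Set (EuclideanSpace ℝ (Fin d))))
              ≤ dist (X i) (ci + r • s) := h1
            _ ≤ (dist (X i) ci - r) + r * (ε / 2) := hds
            _ ≤ ε / 8 * (t + dist (X i) ci) + dist (X i) ci * (ε / 2) := by
                have hz := mul_le_mul_of_nonneg_right hrle (by linarith : (0:ℝ) ≤ ε / 2)
                linarith
            _ ≤ 5/8 * ε * (t + dist (X i) ci) := by
                have hz : 0 ≤ ε * t := mul_nonneg hε.le htpos.le
                linarith
      have hsum : kmedianCost ξ X ≤ 5/8 * ε * ((n:ℝ) * t + A) := by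
        unfold kmedianCost
        calc ∑ i, sInf ((fun c => dist (X i) c) '' (ξ : Set (EuclideanSpace ℝ (Fin d))))
            ≤ ∑ i, 5/8 * ε * (t + sInf ((fun c => dist (X i) c) ''
                (C : Set (EuclideanSpace ℝ (Fin d))))) :=
              Finset.sum_le_sum (fun i _ => hpoint i)
          _ = 5/8 * ε * ((n:ℝ) * t + A) := by
              rw [← Finset.mul_sum, Finset.sum_add_distrib, Finset.sum_const, hsumC,
                Finset.card_univ, Fintype.card_fin]
              push_cast
              ring
      have hnt : (n:ℝ) * t = A / 4 := by
        rw [ht]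
        field_simp
      rw [hnt] at hsum
      calc kmedianCost ξ X ≤ 5/8 * ε * (A / 4 + A) := hsum
        _ = 25/32 * ε * A := by ring
        _ ≤ 25/32 * ε * (Δ + Δ / 4) := by
            have hz := mul_le_mul_of_nonneg_left hAlt.le
              (by linarith : (0:ℝ) ≤ 25/32 * ε)
            linarith
        _ ≤ ε * Δ := by
            have hz : 0 ≤ ε * Δ := mul_nonneg hε.le hΔpos.le
            linarith
  · -- degenerate case: at most k distinct points
    push_neg at hmany
    set ξ := univ.image X with hξ
    have hξne : ξ.Nonempty := by
      refine Finset.Nonempty.image ?_ X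
      exact ⟨⟨0, by omega⟩, Finset.mem_univ _⟩
    refine ⟨ξ, hξne, ?_, ?_⟩
    · calc (ξ.card : ℝ) ≤ (k:ℝ) := by exact_mod_cast hmany
        _ = k * 1 := by ring
        _ ≤ (100 * N * L / ε) * k := by
            have h1 : (1:ℝ) ≤ 100 * N * L / ε := by
              rw [le_div_iff₀ hε]
              nlinarith
            nlinarith
        _ = 100 * (N:ℝ) * k * L / ε := by ring
    · have hzero : kmedianCost ξ X = 0 := by
        rw [kmedianCost]
        apply Finset.sum_eq_zero
        intro i _
        apply le_antisymm
        · have := KMedianAux.term_le ξ (X i) (X i) (Finset.mem_image_of_mem X (Finset.mem_univ i))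
          simpa using this
        · exact KMedianAux.term_nonneg ξ (X i)
      rw [hzero]
      exact mul_nonneg hε.le (KMedianAux.opt_nonneg hd k X)
end

section
/- There is a universal constant c > 0 such that the following holds. Let d ≥ 2 and let P(S^{d-1}, δ) denote the packing number of the unit sphere in ℝ^d at scale δ. For every ε with 0 < ε < 1/8 and every integer k ≥ 1, there exist arbitrarily large integers n and a family X of n points in ℝ^d (points may be repeated) such that every finite set ξ ⊆ ℝ^d whose k-median cost satisfies Φ(ξ, X) ≤ ε · Δ_k(X) has cardinality |ξ| ≥ c · P(S^{d-1}, 4ε) · k · (log n)/ε. -/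
open Metric


/-- Packing number `P(S^{d-1}, δ)` of the unit sphere in `ℝ^d` at scale `δ`. -/
noncomputable def packingNumber (d : ℕ) (δ : ℝ) : ℕ :=
  sSup {m : ℕ | ∃ S : Finset (EuclideanSpace ℝ (Fin d)), S.card = m ∧
    (∀ p ∈ S, ‖p‖ = 1) ∧
    ∀ x ∈ S, ∀ y ∈ S, x ≠ y → δ ≤ dist x y}

lemma packing_bddAbove (d : ℕ) (δ : ℝ) (hδ : 0 < δ) :
    BddAbove {m : ℕ | ∃ S : Finset (EuclideanSpace ℝ (Fin d)), S.card = m ∧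
      (∀ p ∈ S, ‖p‖ = 1) ∧
      ∀ x ∈ S, ∀ y ∈ S, x ≠ y → δ ≤ dist x y} := by
  classical
  have hK : IsCompact (sphere (0 : EuclideanSpace ℝ (Fin d)) 1) := isCompact_sphere _ _
  have htb := hK.totallyBounded
  rw [Metric.totallyBounded_iff] at htb
  obtain ⟨t, htfin, hcov⟩ := htb (δ/2) (by linarith)
  refine ⟨htfin.toFinset.card, ?_⟩
  rintro m ⟨S, rfl, hunit, hsep⟩
  have hmem : ∀ p ∈ S, ∃ y ∈ htfin.toFinset, p ∈ ball y (δ/2) := by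
    intro p hp
    have hps : p ∈ sphere (0 : EuclideanSpace ℝ (Fin d)) 1 := by
      simp [mem_sphere_iff_norm, hunit p hp]
    have := hcov hps
    simp only [Set.mem_iUnion] at this
    obtain ⟨y, hy, hby⟩ := this
    exact ⟨y, by simpa using hy, hby⟩
  choose f hf1 hf2 using hmem
  apply Finset.card_le_card_of_injOn (fun p => if h : p ∈ S then f p h else 0)
  · intro p hp; simp only [Finset.mem_coe] at hp ⊢; simp only [hp, dif_pos]; exact hf1 p hp
  · intro p hp q hq hpq
    simp only [Finset.mem_coe] at hp hq
    simp only [hp, hq, dif_pos] at hpq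
    by_contra hne
    have h1 := hf2 p hp
    have h2 := hf2 q hq
    rw [mem_ball] at h1 h2
    rw [hpq] at h1
    have : dist p q < δ := by
      calc dist p q ≤ dist p (f q hq) + dist q (f q hq) := dist_triangle_right _ _ _
      _ < δ/2 + δ/2 := by linarith
      _ = δ := by ring
    linarith [hsep p hp q hq hne]

lemma exists_packing_witness (d : ℕ) (hd : 2 ≤ d) (δ : ℝ) (hδ : 0 < δ) :
    1 ≤ packingNumber d δ ∧
    ∃ S : Finset (EuclideanSpace ℝ (Fin d)), S.card = packingNumber d δ ∧
      (∀ p ∈ S, ‖p‖ = 1) ∧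
      ∀ x ∈ S, ∀ y ∈ S, x ≠ y → δ ≤ dist x y := by
  classical
  have h1 : (1 : ℕ) ∈ {m : ℕ | ∃ S : Finset (EuclideanSpace ℝ (Fin d)), S.card = m ∧
      (∀ p ∈ S, ‖p‖ = 1) ∧
      ∀ x ∈ S, ∀ y ∈ S, x ≠ y → δ ≤ dist x y} := by
    refine ⟨{EuclideanSpace.single (⟨0, by omega⟩ : Fin d) (1:ℝ)}, by simp, ?_, ?_⟩
    · intro p hp; rw [Finset.mem_singleton] at hp; subst hp
      rw [EuclideanSpace.norm_single]; norm_num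
    · intro x hx y hy hxy
      rw [Finset.mem_singleton] at hx hy; exact absurd (hx.trans hy.symm) hxy
  have hbdd := packing_bddAbove d δ hδ
  exact ⟨le_csSup hbdd h1, Nat.sSup_mem ⟨1, h1⟩ hbdd⟩

lemma exists_good_L (ε : ℝ) (hε : 0 < ε) (B : ℝ) (hB : 1 ≤ B) (N : ℕ) :
    ∃ L : ℕ, N ≤ L ∧ 1 ≤ L ∧ Real.log (B * L) ≤ ε * L := by
  refine ⟨max N (⌈(2*Real.log B)/ε⌉₊ + ⌈16/ε^2⌉₊ + 1), le_max_left _ _, ?_, ?_⟩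
  · have := le_max_right N (⌈(2*Real.log B)/ε⌉₊ + ⌈16/ε^2⌉₊ + 1); omega
  · set L := max N (⌈(2*Real.log B)/ε⌉₊ + ⌈16/ε^2⌉₊ + 1) with hL
    have hL1 : 1 ≤ L := by have := le_max_right N (⌈(2*Real.log B)/ε⌉₊ + ⌈16/ε^2⌉₊ + 1); omega
    have hLR : (1:ℝ) ≤ (L:ℝ) := by exact_mod_cast hL1
    have hlogB : Real.log B ≤ ε * L / 2 := by
      have h1 : (2*Real.log B)/ε ≤ L := by
        calc (2*Real.log B)/ε ≤ (⌈(2*Real.log B)/ε⌉₊ : ℝ) := Nat.le_ceil _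
        _ ≤ (L:ℝ) := by
          have : ⌈(2*Real.log B)/ε⌉₊ ≤ L := by
            have := le_max_right N (⌈(2*Real.log B)/ε⌉₊ + ⌈16/ε^2⌉₊ + 1); omega
          exact_mod_cast this
      rw [div_le_iff₀ hε] at h1
      nlinarith
    have hL16 : 16/ε^2 ≤ (L:ℝ) := by
      calc 16/ε^2 ≤ (⌈16/ε^2⌉₊ : ℝ) := Nat.le_ceil _
      _ ≤ (L:ℝ) := by
        have : ⌈16/ε^2⌉₊ ≤ L := by
          have := le_max_right N (⌈(2*Real.log B)/ε⌉₊ + ⌈16/ε^2⌉₊ + 1); omega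
        exact_mod_cast this
    have hsq : 4/ε ≤ Real.sqrt L := by
      rw [show (16:ℝ)/ε^2 = (4/ε)^2 by ring] at hL16
      have := Real.sqrt_le_sqrt hL16
      rwa [Real.sqrt_sq (by positivity)] at this
    have hlogL : Real.log L ≤ ε * L / 2 := by
      have h1 : Real.log L = 2 * Real.log (Real.sqrt L) := by
        rw [Real.log_sqrt (by positivity)]; ring
      have h2 : Real.log (Real.sqrt L) ≤ Real.sqrt L - 1 :=
        Real.log_le_sub_one_of_pos (by positivity)
      have h3 : Real.sqrt L * Real.sqrt L = (L:ℝ) := Real.mul_self_sqrt (by positivity)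
      have h4 : 4/ε ≤ Real.sqrt L := hsq
      rw [div_le_iff₀ hε] at h4
      nlinarith [Real.sqrt_nonneg (L:ℝ)]
    have : Real.log (B * L) = Real.log B + Real.log L :=
      Real.log_mul (by linarith) (by positivity)
    linarith

lemma loc_sep {E : Type*} [NormedAddCommGroup E] [NormedSpace ℝ E]
    (ε : ℝ) (hε : 0 < ε) (hε8 : ε < 1/8)
    (e0 : E) (he0 : ‖e0‖ = 1)
    (u u' : E) (hu : ‖u‖ = 1) (hu' : ‖u'‖ = 1)
    (t t' j j' : ℕ)
    (hcase : t ≠ t' ∨ j ≠ j' ∨ 4*ε ≤ dist u u') :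
    2*ε*(((1-2*ε)/(1+2*ε))^j + ((1-2*ε)/(1+2*ε))^j')
      ≤ dist ((10*t:ℝ) • e0 + ((1-2*ε)/(1+2*ε))^j • u)
             ((10*t':ℝ) • e0 + ((1-2*ε)/(1+2*ε))^j' • u') := by
  set ρ : ℝ := (1-2*ε)/(1+2*ε) with hρ
  have hρ0 : 0 < ρ := by apply div_pos <;> linarith
  have hρ1 : ρ < 1 := by rw [hρ, div_lt_one (by linarith)]; linarith
  have hpj : 0 < ρ^j := pow_pos hρ0 j
  have hpj' : 0 < ρ^j' := pow_pos hρ0 j'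
  have hpj1 : ρ^j ≤ 1 := pow_le_one₀ hρ0.le hρ1.le
  have hpj'1 : ρ^j' ≤ 1 := pow_le_one₀ hρ0.le hρ1.le
  have hnu : ‖ρ^j • u‖ = ρ^j := by rw [norm_smul, hu, Real.norm_eq_abs, abs_of_pos hpj]; ring
  have hnu' : ‖ρ^j' • u'‖ = ρ^j' := by
    rw [norm_smul, hu', Real.norm_eq_abs, abs_of_pos hpj']; ring
  rcases eq_or_ne t t' with rfl | htt
  · rcases eq_or_ne j j' with rfl | hjj
    · have hd : 4*ε ≤ dist u u' := by
        rcases hcase with h | h | h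
        · exact absurd rfl h
        · exact absurd rfl h
        · exact h
      have heq : dist ((10*t:ℝ) • e0 + ρ^j • u) ((10*t:ℝ) • e0 + ρ^j • u')
          = ρ^j * dist u u' := by
        rw [dist_add_left, dist_smul₀, Real.norm_eq_abs, abs_of_pos hpj]
      rw [heq]
      nlinarith
    · have key : ∀ a b : ℕ, a < b → 2*ε*(ρ^a + ρ^b) ≤ ρ^a - ρ^b := by
        intro a b hab
        have h1 : ρ^b ≤ ρ^(a+1) := pow_le_pow_of_le_one hρ0.le hρ1.le hab
        have h2 : (1+2*ε) * ρ^(a+1) = (1-2*ε) * ρ^a := by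
          rw [pow_succ, hρ]; field_simp
        have hpa : 0 < ρ^a := pow_pos hρ0 a
        have hpb : 0 < ρ^b := pow_pos hρ0 b
        nlinarith
      have hdist1 : ρ^j - ρ^j' ≤ dist ((10*t:ℝ) • e0 + ρ^j • u) ((10*t:ℝ) • e0 + ρ^j' • u') := by
        rw [dist_add_left, dist_eq_norm]
        calc ρ^j - ρ^j' = ‖ρ^j • u‖ - ‖ρ^j' • u'‖ := by rw [hnu, hnu']
        _ ≤ ‖ρ^j • u - ρ^j' • u'‖ := norm_sub_norm_le _ _
      have hdist2 : ρ^j' - ρ^j ≤ dist ((10*t:ℝ) • e0 + ρ^j • u) ((10*t:ℝ) • e0 + ρ^j' • u') := by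
        rw [dist_add_left, dist_eq_norm]
        calc ρ^j' - ρ^j = ‖ρ^j' • u'‖ - ‖ρ^j • u‖ := by rw [hnu, hnu']
        _ ≤ ‖ρ^j' • u' - ρ^j • u‖ := norm_sub_norm_le _ _
        _ = ‖ρ^j • u - ρ^j' • u'‖ := norm_sub_rev _ _
      rcases Nat.lt_or_ge j j' with h | h
      · have := key j j' h
        linarith
      · have h2 := key j' j (lt_of_le_of_ne h (Ne.symm hjj))
        linarith
  · have hqq : dist ((10*t:ℝ) • e0) ((10*t':ℝ) • e0) = |10*(t:ℝ) - 10*(t':ℝ)| := by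
      rw [dist_eq_norm, ← sub_smul, norm_smul, he0, Real.norm_eq_abs]; ring_nf
    have h10 : 10 ≤ dist ((10*t:ℝ) • e0) ((10*t':ℝ) • e0) := by
      rw [hqq]
      have h1 : (1:ℝ) ≤ |(t:ℝ) - (t':ℝ)| := by
        rcases Nat.lt_or_ge t t' with h | h
        · have h' : (t:ℝ) + 1 ≤ t' := by exact_mod_cast h
          rw [abs_sub_comm, abs_of_pos (by linarith)]; linarith
        · have htt' : t' < t := lt_of_le_of_ne h (Ne.symm htt)
          have h' : (t':ℝ) + 1 ≤ t := by exact_mod_cast htt'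
          rw [abs_of_pos (by linarith)]; linarith
      have h2 : |10*(t:ℝ) - 10*(t':ℝ)| = 10 * |(t:ℝ) - (t':ℝ)| := by
        rw [show 10*(t:ℝ) - 10*(t':ℝ) = 10 * ((t:ℝ) - (t':ℝ)) by ring, abs_mul]
        norm_num
      rw [h2]; linarith
    have hn1 : dist ((10*t:ℝ) • e0) ((10*t:ℝ) • e0 + ρ^j • u) = ρ^j := by
      rw [dist_eq_norm]
      have heq : (10*(t:ℝ)) • e0 - ((10*(t:ℝ)) • e0 + ρ^j • u) = -(ρ^j • u) := by abel
      rw [heq, norm_neg, hnu]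
    have hn2 : dist ((10*t':ℝ) • e0 + ρ^j' • u') ((10*t':ℝ) • e0) = ρ^j' := by
      rw [dist_eq_norm, show (10*(t':ℝ)) • e0 + ρ^j' • u' - (10*(t':ℝ)) • e0 = ρ^j' • u' by abel,
        hnu']
    have htri : dist ((10*t:ℝ) • e0) ((10*t':ℝ) • e0)
        ≤ ρ^j + dist ((10*t:ℝ) • e0 + ρ^j • u) ((10*t':ℝ) • e0 + ρ^j' • u') + ρ^j' := by
      calc dist ((10*t:ℝ) • e0) ((10*t':ℝ) • e0)
          ≤ dist ((10*t:ℝ) • e0) ((10*t:ℝ) • e0 + ρ^j • u)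
            + dist ((10*t:ℝ) • e0 + ρ^j • u) ((10*t':ℝ) • e0 + ρ^j' • u')
            + dist ((10*t':ℝ) • e0 + ρ^j' • u') ((10*t':ℝ) • e0) := dist_triangle4 _ _ _ _
        _ = ρ^j + dist ((10*t:ℝ) • e0 + ρ^j • u) ((10*t':ℝ) • e0 + ρ^j' • u') + ρ^j' := by
            rw [hn1, hn2]
    nlinarith

set_option maxHeartbeats 2000000

/-- lower bound for Euclidean k-median. There is a universal
constant `c > 0` such that for every `d ≥ 2`, `0 < ε < 1/8`, `k ≥ 1`, there are
arbitrarily large `n` and a family `X` of `n` points in `ℝ^d` (repetitions allowed)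
such that every finite nonempty set `ξ ⊆ ℝ^d` with `Φ(ξ, X) ≤ ε · Δ_k(X)` has
`|ξ| ≥ c · P(S^{d-1}, 4ε) · k · log n / ε`. -/
theorem kmedian_lower_bound :
    ∃ c : ℝ, 0 < c ∧
      ∀ d : ℕ, 2 ≤ d →
      ∀ ε : ℝ, 0 < ε → ε < 1 / 8 →
      ∀ k : ℕ, 1 ≤ k →
      ∀ N : ℕ, ∃ n : ℕ, N ≤ n ∧
        ∃ X : Fin n → EuclideanSpace ℝ (Fin d),
          ∀ ξ : Finset (EuclideanSpace ℝ (Fin d)), ξ.Nonempty →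
            kmedianCost ξ X ≤ ε * kmedianOpt k X →
            c * (packingNumber d (4 * ε) : ℝ) * k * Real.log n / ε ≤ (ξ.card : ℝ) := by
  classical
  refine ⟨1/21, by norm_num, ?_⟩
  intro d hd ε hε hε8 k hk N
  obtain ⟨hP1, S, hScard, hSunit, hSsep⟩ := exists_packing_witness d hd (4*ε) (by linarith)
  set P := _root_.packingNumber d (4 * ε) with hPdef
  set ρ : ℝ := (1-2*ε)/(1+2*ε) with hρ
  have hρ0 : 0 < ρ := by apply div_pos <;> linarith
  have hρ1 : ρ < 1 := by rw [hρ, div_lt_one (by linarith)]; linarith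
  have hB1 : (1:ℝ) ≤ ((4*k*P : ℕ) : ℝ) := by
    have h : 1 ≤ 4*k*P :=
      le_trans (by norm_num) (Nat.mul_le_mul (Nat.mul_le_mul (le_refl 4) hk) hP1)
    exact_mod_cast h
  obtain ⟨L, hLN, hL1, hlog⟩ := exists_good_L ε hε ((4*k*P : ℕ) : ℝ) hB1 N
  set e0 : EuclideanSpace ℝ (Fin d) := EuclideanSpace.single (⟨0, by omega⟩ : Fin d) (1:ℝ)
    with he0def
  have he0 : ‖e0‖ = 1 := by rw [he0def, EuclideanSpace.norm_single]; norm_num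
  set w : ℕ → ℕ := fun j => ⌈(3:ℝ)/ρ^j⌉₊ with hw
  have hρjpos : ∀ j : ℕ, 0 < ρ^j := fun j => pow_pos hρ0 j
  have hρj1 : ∀ j : ℕ, ρ^j ≤ 1 := fun j => pow_le_one₀ hρ0.le hρ1.le
  have hw3 : ∀ j : ℕ, (3:ℝ) ≤ (w j : ℝ) * ρ^j := by
    intro j
    have h1 : (3:ℝ)/ρ^j ≤ (w j : ℝ) := Nat.le_ceil _
    have := hρjpos j
    rw [div_le_iff₀ this] at h1
    linarith
  have hw4 : ∀ j : ℕ, (w j : ℝ) * ρ^j ≤ 4 := by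
    intro j
    have h1 : (w j : ℝ) < (3:ℝ)/ρ^j + 1 := Nat.ceil_lt_add_one (by positivity)
    have h2 := hρjpos j
    have h3 := hρj1 j
    have : (w j : ℝ) * ρ^j < ((3:ℝ)/ρ^j + 1) * ρ^j := by
      apply mul_lt_mul_of_pos_right h1 h2
    rw [add_mul, div_mul_cancel₀ _ (ne_of_gt h2)] at this
    linarith
  have hw1 : ∀ j : ℕ, 1 ≤ w j := by
    intro j
    simp only [hw]
    exact Nat.one_le_ceil_iff.mpr (by positivity)
  -- index types
  set Loc := Fin k × Fin L × {x // x ∈ S} with hLoc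
  set pos : Loc → EuclideanSpace ℝ (Fin d) :=
    fun ℓ => (10*((ℓ.1 : ℕ):ℝ)) • e0 + ρ^((ℓ.2.1 : ℕ)) • (ℓ.2.2 : EuclideanSpace ℝ (Fin d))
    with hpos
  set W : Loc → ℕ := fun ℓ => w (ℓ.2.1 : ℕ) with hW
  set n := Fintype.card (Σ ℓ : Loc, Fin (W ℓ)) with hn
  set e := Fintype.equivFin (Σ ℓ : Loc, Fin (W ℓ)) with he
  set X : Fin n → EuclideanSpace ℝ (Fin d) := fun i => pos ((e.symm i).1) with hX
  have hcardLoc : Fintype.card Loc = k * L * P := by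
    show Fintype.card (Fin k × Fin L × {x // x ∈ S}) = k * L * P
    simp [Fintype.card_prod, Fintype.card_coe, hScard]
    ring
  have hcost : ∀ C : Finset (EuclideanSpace ℝ (Fin d)),
      kmedianCost C X = ∑ ℓ : Loc, (W ℓ : ℝ) *
        sInf ((fun c => dist (pos ℓ) c) '' (C : Set (EuclideanSpace ℝ (Fin d)))) := by
    intro C
    unfold kmedianCost
    have h1 := Equiv.sum_comp e.symm
      (fun i : (Σ ℓ : Loc, Fin (W ℓ)) =>
        sInf ((fun c => dist (pos i.1) c) '' (C : Set (EuclideanSpace ℝ (Fin d)))))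
    rw [show (∑ i, sInf ((fun c => dist (X i) c) '' (C : Set (EuclideanSpace ℝ (Fin d)))))
      = ∑ i, (fun i : (Σ ℓ : Loc, Fin (W ℓ)) =>
        sInf ((fun c => dist (pos i.1) c) '' (C : Set (EuclideanSpace ℝ (Fin d))))) (e.symm i)
      from rfl, h1]
    rw [← Finset.univ_sigma_univ, Finset.sum_sigma]
    simp [mul_comm]
  have hn_sum : (n:ℕ) = ∑ ℓ : Loc, W ℓ := by
    rw [hn]; simp [Fintype.card_sigma]
  -- n is at least N
  have hLocLB : Fintype.card Loc ≤ n := by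
    rw [hn_sum]
    calc Fintype.card Loc = ∑ _ℓ : Loc, 1 := by simp
    _ ≤ ∑ ℓ : Loc, W ℓ := Finset.sum_le_sum (fun ℓ _ => hw1 _)
  have hnN : N ≤ n := by
    have h1 : L ≤ k * L * P := by
      calc L ≤ k * L := Nat.le_mul_of_pos_left L hk
      _ ≤ k * L * P := Nat.le_mul_of_pos_right _ hP1
    have := hcardLoc
    omega
  have hn1 : 1 ≤ n := by
    have h1 : 1 ≤ k * L * P := Nat.mul_pos (Nat.mul_pos hk hL1) hP1
    omega
  refine ⟨n, hnN, X, ?_⟩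
  intro ξ hξne hξcost
  -- upper bound on the optimum via the cluster centers
  set C0 : Finset (EuclideanSpace ℝ (Fin d)) :=
    Finset.image (fun t : Fin k => (10*((t:ℕ):ℝ)) • e0) Finset.univ with hC0
  have he0ne : e0 ≠ 0 := by
    intro h; rw [h] at he0; simp at he0
  have hinj : Function.Injective (fun t : Fin k => (10*((t:ℕ):ℝ)) • e0) := by
    intro a b hab
    simp only at hab
    have h2 : ((10*((a:ℕ):ℝ)) - (10*((b:ℕ):ℝ))) • e0 = 0 := by rw [sub_smul, hab, sub_self]
    rcases smul_eq_zero.mp h2 with h | h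
    · have h3 : ((a:ℕ):ℝ) = ((b:ℕ):ℝ) := by linarith [sub_eq_zero.mp h]
      have h4 : (a:ℕ) = (b:ℕ) := by exact_mod_cast h3
      exact Fin.ext h4
    · exact absurd h he0ne
  have hC0card : C0.card = k := by
    rw [hC0, Finset.card_image_of_injective _ hinj, Finset.card_univ, Fintype.card_fin]
  have hopt_le : kmedianOpt k X ≤ kmedianCost C0 X := by
    apply csInf_le
    · refine ⟨0, ?_⟩
      rintro r ⟨C, hC, rfl⟩
      unfold kmedianCost
      apply Finset.sum_nonneg
      intro i _
      exact Real.sInf_nonneg (by rintro b ⟨c, _, rfl⟩; exact dist_nonneg)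
    · exact ⟨C0, hC0card, rfl⟩
  have hC0cost : kmedianCost C0 X ≤ 4 * ((k*L*P : ℕ):ℝ) := by
    rw [hcost C0]
    have hbd : ∀ ℓ : Loc, (W ℓ : ℝ) *
        sInf ((fun c => dist (pos ℓ) c) '' (C0 : Set (EuclideanSpace ℝ (Fin d)))) ≤ 4 := by
      intro ℓ
      have hmem : (10*((ℓ.1:ℕ):ℝ)) • e0 ∈ (C0 : Set (EuclideanSpace ℝ (Fin d))) := by
        simp only [hC0, Finset.coe_image, Set.mem_image, Finset.coe_univ, Set.mem_univ]
        exact ⟨ℓ.1, trivial, rfl⟩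
      have hle : sInf ((fun c => dist (pos ℓ) c) '' (C0 : Set (EuclideanSpace ℝ (Fin d))))
          ≤ dist (pos ℓ) ((10*((ℓ.1:ℕ):ℝ)) • e0) :=
        csInf_le ⟨0, by rintro b ⟨c, _, rfl⟩; exact dist_nonneg⟩ ⟨_, hmem, rfl⟩
      have hdist : dist (pos ℓ) ((10*((ℓ.1:ℕ):ℝ)) • e0) = ρ^((ℓ.2.1:ℕ)) := by
        show dist ((10*((ℓ.1:ℕ):ℝ)) • e0 + ρ^((ℓ.2.1:ℕ)) • (ℓ.2.2 : EuclideanSpace ℝ (Fin d)))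
          ((10*((ℓ.1:ℕ):ℝ)) • e0) = ρ^((ℓ.2.1:ℕ))
        rw [dist_eq_norm, show (10*((ℓ.1:ℕ):ℝ)) • e0 + ρ^((ℓ.2.1:ℕ)) • (ℓ.2.2 : EuclideanSpace ℝ (Fin d))
          - (10*((ℓ.1:ℕ):ℝ)) • e0 = ρ^((ℓ.2.1:ℕ)) • (ℓ.2.2 : EuclideanSpace ℝ (Fin d)) by abel]
        rw [norm_smul, hSunit _ ℓ.2.2.2, Real.norm_eq_abs, abs_of_pos (hρjpos _)]
        ring
      have hWnn : (0:ℝ) ≤ (W ℓ : ℝ) := Nat.cast_nonneg _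
      calc (W ℓ : ℝ) * sInf ((fun c => dist (pos ℓ) c) '' (C0 : Set (EuclideanSpace ℝ (Fin d))))
          ≤ (W ℓ : ℝ) * ρ^((ℓ.2.1:ℕ)) :=
            mul_le_mul_of_nonneg_left (hle.trans_eq hdist) hWnn
      _ ≤ 4 := hw4 _
    calc ∑ ℓ : Loc, (W ℓ : ℝ) *
        sInf ((fun c => dist (pos ℓ) c) '' (C0 : Set (EuclideanSpace ℝ (Fin d))))
        ≤ ∑ _ℓ : Loc, (4:ℝ) := Finset.sum_le_sum (fun ℓ _ => hbd ℓ)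
    _ = 4 * ((k*L*P : ℕ):ℝ) := by
      rw [Finset.sum_const, Finset.card_univ, hcardLoc, nsmul_eq_mul]
      push_cast; ring
  -- served locations
  set Srv : Finset Loc := Finset.univ.filter
    (fun ℓ => ∃ c ∈ ξ, dist (pos ℓ) c < 2*ε*ρ^((ℓ.2.1:ℕ))) with hSrv
  have hsep_loc : ∀ ℓ ℓ' : Loc, ℓ ≠ ℓ' →
      2*ε*(ρ^((ℓ.2.1:ℕ)) + ρ^((ℓ'.2.1:ℕ))) ≤ dist (pos ℓ) (pos ℓ') := by
    intro ℓ ℓ' hne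
    have hcase : ((ℓ.1:ℕ)) ≠ ((ℓ'.1:ℕ)) ∨ ((ℓ.2.1:ℕ)) ≠ ((ℓ'.2.1:ℕ)) ∨
        4*ε ≤ dist (ℓ.2.2 : EuclideanSpace ℝ (Fin d)) (ℓ'.2.2 : EuclideanSpace ℝ (Fin d)) := by
      by_cases h1 : ℓ.1 = ℓ'.1
      · by_cases h2 : ℓ.2.1 = ℓ'.2.1
        · right; right
          have h3 : ℓ.2.2 ≠ ℓ'.2.2 := by
            intro h3
            apply hne
            exact Prod.ext h1 (Prod.ext h2 h3)
          exact hSsep _ ℓ.2.2.2 _ ℓ'.2.2.2 (fun hh => h3 (Subtype.ext hh))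
        · right; left; exact fun hh => h2 (Fin.ext hh)
      · left; exact fun hh => h1 (Fin.ext hh)
    have hsep := loc_sep ε hε hε8 e0 he0
      (ℓ.2.2 : EuclideanSpace ℝ (Fin d)) (ℓ'.2.2 : EuclideanSpace ℝ (Fin d))
      (hSunit _ ℓ.2.2.2) (hSunit _ ℓ'.2.2.2)
      ((ℓ.1:ℕ)) ((ℓ'.1:ℕ)) ((ℓ.2.1:ℕ)) ((ℓ'.2.1:ℕ)) hcase
    rw [← hρ] at hsep
    exact hsep
  have hSrvle : Srv.card ≤ ξ.card := by
    apply Finset.card_le_card_of_injOn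
      (fun ℓ => if h : ∃ c ∈ ξ, dist (pos ℓ) c < 2*ε*ρ^((ℓ.2.1:ℕ)) then h.choose else (pos ℓ))
    · intro ℓ hℓ
      rw [hSrv, Finset.mem_coe, Finset.mem_filter] at hℓ
      obtain ⟨-, h⟩ := hℓ
      simp only [h, dif_pos]
      exact h.choose_spec.1
    · intro ℓ hℓ ℓ' hℓ' heq
      simp only [Finset.mem_coe, hSrv, Finset.mem_filter] at hℓ hℓ'
      obtain ⟨-, h⟩ := hℓ
      obtain ⟨-, h'⟩ := hℓ'
      simp only [h, h', dif_pos] at heq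
      by_contra hne
      have hd1 := h.choose_spec.2
      have hd2 := h'.choose_spec.2
      have htri : dist (pos ℓ) (pos ℓ') < 2*ε*ρ^((ℓ.2.1:ℕ)) + 2*ε*ρ^((ℓ'.2.1:ℕ)) := by
        calc dist (pos ℓ) (pos ℓ') ≤ dist (pos ℓ) h.choose + dist (pos ℓ') h'.choose := by
              rw [heq]; exact dist_triangle_right _ _ _
        _ < 2*ε*ρ^((ℓ.2.1:ℕ)) + 2*ε*ρ^((ℓ'.2.1:ℕ)) := add_lt_add hd1 hd2
      have := hsep_loc ℓ ℓ' hne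
      nlinarith
  -- cost lower bound from unserved locations
  have hξ_lb : 6*ε*(((k*L*P : ℕ):ℝ) - (Srv.card:ℝ)) ≤ kmedianCost ξ X := by
    rw [hcost ξ]
    set NSrv : Finset Loc := Finset.univ.filter
      (fun ℓ => ¬ ∃ c ∈ ξ, dist (pos ℓ) c < 2*ε*ρ^((ℓ.2.1:ℕ))) with hNSrv
    have hterm0 : ∀ ℓ : Loc, 0 ≤ (W ℓ : ℝ) *
        sInf ((fun c => dist (pos ℓ) c) '' (ξ : Set (EuclideanSpace ℝ (Fin d)))) := by
      intro ℓ
      apply mul_nonneg (Nat.cast_nonneg _)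
      exact Real.sInf_nonneg (by rintro b ⟨c, _, rfl⟩; exact dist_nonneg)
    have hterm : ∀ ℓ ∈ NSrv, 6*ε ≤ (W ℓ : ℝ) *
        sInf ((fun c => dist (pos ℓ) c) '' (ξ : Set (EuclideanSpace ℝ (Fin d)))) := by
      intro ℓ hℓ
      rw [hNSrv, Finset.mem_filter] at hℓ
      obtain ⟨-, hno⟩ := hℓ
      have himne : ((fun c => dist (pos ℓ) c) ''
          (ξ : Set (EuclideanSpace ℝ (Fin d)))).Nonempty := by
        obtain ⟨c, hc⟩ := hξne
        exact ⟨_, ⟨c, hc, rfl⟩⟩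
      have hg : 2*ε*ρ^((ℓ.2.1:ℕ)) ≤
          sInf ((fun c => dist (pos ℓ) c) '' (ξ : Set (EuclideanSpace ℝ (Fin d)))) := by
        apply le_csInf himne
        rintro b ⟨c, hc, rfl⟩
        by_contra hlt
        push_neg at hlt
        exact hno ⟨c, hc, hlt⟩
      have h1 : (W ℓ : ℝ) * (2*ε*ρ^((ℓ.2.1:ℕ))) ≤ (W ℓ : ℝ) *
          sInf ((fun c => dist (pos ℓ) c) '' (ξ : Set (EuclideanSpace ℝ (Fin d)))) :=
        mul_le_mul_of_nonneg_left hg (Nat.cast_nonneg _)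
      have h2 : (3:ℝ) ≤ (W ℓ : ℝ) * ρ^((ℓ.2.1:ℕ)) := hw3 _
      nlinarith
    have hsum_ge : ∑ ℓ ∈ NSrv, (6*ε : ℝ) ≤ ∑ ℓ : Loc, (W ℓ : ℝ) *
        sInf ((fun c => dist (pos ℓ) c) '' (ξ : Set (EuclideanSpace ℝ (Fin d)))) := by
      calc ∑ ℓ ∈ NSrv, (6*ε : ℝ) ≤ ∑ ℓ ∈ NSrv, (W ℓ : ℝ) *
          sInf ((fun c => dist (pos ℓ) c) '' (ξ : Set (EuclideanSpace ℝ (Fin d)))) :=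
            Finset.sum_le_sum hterm
      _ ≤ ∑ ℓ : Loc, (W ℓ : ℝ) *
          sInf ((fun c => dist (pos ℓ) c) '' (ξ : Set (EuclideanSpace ℝ (Fin d)))) :=
            Finset.sum_le_sum_of_subset_of_nonneg (Finset.subset_univ _)
              (fun ℓ _ _ => hterm0 ℓ)
    have hcards : Srv.card + NSrv.card = Fintype.card Loc := by
      rw [hSrv, hNSrv]
      rw [Finset.card_filter_add_card_filter_not]
      exact Finset.card_univ
    have hNcard : (NSrv.card : ℝ) = ((k*L*P : ℕ):ℝ) - (Srv.card:ℝ) := by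
      have : NSrv.card = k*L*P - Srv.card := by omega
      rw [this]
      have hle : Srv.card ≤ k*L*P := by omega
      push_cast [hle]
      ring
    calc 6*ε*(((k*L*P : ℕ):ℝ) - (Srv.card:ℝ)) = ((NSrv.card:ℝ))*(6*ε) := by
          rw [hNcard]; ring
    _ = ∑ _ℓ ∈ NSrv, (6*ε : ℝ) := by rw [Finset.sum_const, nsmul_eq_mul]
    _ ≤ _ := hsum_ge
  -- combine
  have hM : ((k*L*P : ℕ):ℝ)/3 ≤ (ξ.card:ℝ) := by
    have h1 : kmedianCost ξ X ≤ ε * (4*((k*L*P : ℕ):ℝ)) := by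
      calc kmedianCost ξ X ≤ ε * kmedianOpt k X := hξcost
      _ ≤ ε * (4*((k*L*P : ℕ):ℝ)) :=
        mul_le_mul_of_nonneg_left (hopt_le.trans hC0cost) hε.le
    have h2 : (Srv.card:ℝ) ≤ (ξ.card:ℝ) := by exact_mod_cast hSrvle
    have h3 : 2*ε*((k*L*P : ℕ):ℝ) ≤ 6*ε*(ξ.card:ℝ) := by nlinarith
    have h4 : ((k*L*P : ℕ):ℝ) ≤ 3*(ξ.card:ℝ) := by
      have h2ε : (0:ℝ) < 2*ε := by linarith
      apply le_of_mul_le_mul_left _ h2ε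
      calc 2*ε*((k*L*P : ℕ):ℝ) ≤ 6*ε*(ξ.card:ℝ) := h3
      _ = 2*ε*(3*(ξ.card:ℝ)) := by ring
    linarith
  -- bound log n
  have hρL : (0:ℝ) < ρ^L := pow_pos hρ0 L
  have hnub : (n:ℝ) ≤ ((4*k*P : ℕ):ℝ) * L / ρ^L := by
    have h0 : (n:ℝ) = ∑ ℓ : Loc, (W ℓ : ℝ) := by
      rw [hn_sum]; push_cast; rfl
    have hWub : ∀ ℓ : Loc, (W ℓ : ℝ) ≤ 4 / ρ^L := by
      intro ℓ
      have hjL : ((ℓ.2.1:ℕ)) ≤ L := le_of_lt ℓ.2.1.isLt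
      have h1 : (W ℓ : ℝ) * ρ^((ℓ.2.1:ℕ)) ≤ 4 := hw4 _
      have h2 : ρ^L ≤ ρ^((ℓ.2.1:ℕ)) := pow_le_pow_of_le_one hρ0.le hρ1.le hjL
      rw [le_div_iff₀ hρL]
      calc (W ℓ : ℝ) * ρ^L ≤ (W ℓ : ℝ) * ρ^((ℓ.2.1:ℕ)) :=
            mul_le_mul_of_nonneg_left h2 (Nat.cast_nonneg _)
      _ ≤ 4 := h1
    calc (n:ℝ) = ∑ ℓ : Loc, (W ℓ : ℝ) := h0
    _ ≤ ∑ _ℓ : Loc, (4 / ρ^L) := Finset.sum_le_sum (fun ℓ _ => hWub ℓ)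
    _ = ((k*L*P : ℕ):ℝ) * (4/ρ^L) := by
        rw [Finset.sum_const, Finset.card_univ, hcardLoc, nsmul_eq_mul]
    _ = ((4*k*P : ℕ):ℝ) * L / ρ^L := by push_cast; ring
  have hnpos : (0:ℝ) < (n:ℝ) := by exact_mod_cast hn1
  have hlogn : Real.log n ≤ 7*ε*L := by
    have hlog1 : Real.log n ≤ Real.log (((4*k*P : ℕ):ℝ) * L / ρ^L) :=
      Real.log_le_log hnpos hnub
    have hBLpos : (0:ℝ) < ((4*k*P : ℕ):ℝ) * L := by
      have : (0:ℝ) < (L:ℝ) := by exact_mod_cast hL1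
      nlinarith [hB1]
    have hlog2 : Real.log (((4*k*P : ℕ):ℝ) * L / ρ^L)
        = Real.log (((4*k*P : ℕ):ℝ) * L) - Real.log (ρ^L) :=
      Real.log_div (ne_of_gt hBLpos) (ne_of_gt hρL)
    have hlog3 : Real.log (ρ^L) = L * Real.log ρ := by rw [Real.log_pow]
    have hlogρ : -Real.log ρ ≤ 6*ε := by
      have h1 : Real.log ρ⁻¹ ≤ ρ⁻¹ - 1 := Real.log_le_sub_one_of_pos (inv_pos.mpr hρ0)
      rw [Real.log_inv] at h1
      have h2 : ρ⁻¹ - 1 ≤ 6*ε := by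
        rw [hρ, inv_div]
        have hpos : (0:ℝ) < 1-2*ε := by linarith
        have heq : (1+2*ε)/(1-2*ε) - 1 = (4*ε)/(1-2*ε) := by field_simp; ring
        rw [heq, div_le_iff₀ hpos]
        nlinarith
      linarith
    have h5 : L * (-Real.log ρ) ≤ L * (6*ε) :=
      mul_le_mul_of_nonneg_left hlogρ (Nat.cast_nonneg _)
    have h6 : Real.log n ≤ ε*L + L*(6*ε) := by
      rw [hlog2, hlog3] at hlog1
      linarith [hlog]
    linarith
  -- finish
  have hcoef : (0:ℝ) ≤ 1/21*(P:ℝ)*(k:ℝ) := by positivity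
  have hnum : 1/21*(P:ℝ)*(k:ℝ)*Real.log n ≤ 1/21*(P:ℝ)*(k:ℝ)*(7*ε*L) :=
    mul_le_mul_of_nonneg_left hlogn hcoef
  have hstep : 1/21*(P:ℝ)*(k:ℝ)*Real.log n/ε ≤ 1/21*(P:ℝ)*(k:ℝ)*(7*ε*L)/ε :=
    div_le_div_of_nonneg_right hnum hε.le
  have hfin : 1/21*(P:ℝ)*(k:ℝ)*(7*ε*L)/ε = ((k*L*P : ℕ):ℝ)/3 := by
    push_cast
    field_simp
    ring
  calc 1/21*(P:ℝ)*(k:ℝ)*Real.log n/ε ≤ 1/21*(P:ℝ)*(k:ℝ)*(7*ε*L)/ε := hstep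
  _ = ((k*L*P : ℕ):ℝ)/3 := hfin
  _ ≤ (ξ.card:ℝ) := hM
end
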